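/- arXiv:2309.08383 — 13 statements merged into one kernel-verified Lean document; each statement's English description precedes it below -/
import Mathlib

section
/- Consider system (2) with parameters a,b,c,k,m > 0. If x,y : ℝ → ℝ are differentiable and satisfy x'(t) = F(x(t),y(t)) and y'(t) = G(x(t),y(t)) for all t ≥ 0, with x(0) > 0 and y(0) > 0, then x(t) > 0 and y(t) > 0 for all t ≥ 0. -/
open Set

/-- If `z' = z * g` on `[0,T]` with `|g| ≤ K` there, and `z 0 ≠ 0`, then `z T ≠ 0`.
Proved by a reverse Gronwall inequality. -/
lemma ne_zero_ode (T K : ℝ) (hT : 0 ≤ T) (z g : ℝ → ℝ)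
    (hz : Differentiable ℝ z)
    (hgK : ∀ t ∈ Icc (0:ℝ) T, |g t| ≤ K)
    (heq : ∀ t ∈ Icc (0:ℝ) T, deriv z t = z t * g t)
    (hz0 : z 0 ≠ 0) : z T ≠ 0 := by
  intro hzT
  set f : ℝ → ℝ := fun s => z (T - s) with hf
  have hds : ∀ s ∈ Ico (0:ℝ) T, HasDerivAt f (-(z (T - s) * g (T - s))) s := by
    intro s hs
    have h1 : HasDerivAt (fun s : ℝ => T - s) (-1) s := by
      simpa using (hasDerivAt_id s).const_sub T
    have h2 : HasDerivAt z (deriv z (T - s)) (T - s) := (hz (T - s)).hasDerivAt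
    have h3 := h2.comp s h1
    rw [heq (T - s) ⟨by linarith [hs.2], by linarith [hs.1]⟩] at h3
    have : z (T - s) * g (T - s) * (-1) = -(z (T - s) * g (T - s)) := by ring
    rw [this] at h3
    exact h3
  have cont : ContinuousOn f (Icc 0 T) :=
    (hz.continuous.comp (continuous_const.sub continuous_id)).continuousOn
  have key := norm_le_gronwallBound_of_norm_deriv_right_le (δ := 0) (K := K) (ε := 0)
    (f := f) (f' := fun s => -(z (T - s) * g (T - s))) (a := 0) (b := T)
    cont (fun t ht => (hds t ht).hasDerivWithinAt)
    (by simp [f, hzT])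
    (by
      intro t ht
      have h1 : T - t ∈ Icc (0:ℝ) T := ⟨by linarith [ht.2], by linarith [ht.1]⟩
      have h2 := hgK _ h1
      have : ‖-(z (T - t) * g (T - t))‖ = |g (T - t)| * |z (T - t)| := by
        rw [norm_neg, Real.norm_eq_abs, abs_mul, mul_comm]
      rw [this]
      have h3 : (0:ℝ) ≤ |z (T - t)| := abs_nonneg _
      have : |g (T - t)| * |z (T - t)| ≤ K * |z (T - t)| :=
        mul_le_mul_of_nonneg_right h2 h3
      simpa [f, Real.norm_eq_abs] using this)
  have := key T ⟨hT, le_refl T⟩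
  rw [gronwallBound_ε0] at this
  simp [f, Real.norm_eq_abs] at this
  exact hz0 this

/-- If `z' = z * g` on `[0,T]` with `g` continuous there and `z 0 > 0`, then `z T > 0`. -/
lemma pos_ode (T : ℝ) (hT : 0 ≤ T) (z g : ℝ → ℝ)
    (hz : Differentiable ℝ z)
    (hg : ContinuousOn g (Icc 0 T))
    (heq : ∀ t ∈ Icc (0:ℝ) T, deriv z t = z t * g t)
    (hz0 : 0 < z 0) : 0 < z T := by
  obtain ⟨K, hK⟩ := isCompact_Icc.exists_bound_of_continuousOn hg
  have hne : ∀ s ∈ Icc (0:ℝ) T, z s ≠ 0 := by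
    intro s hs
    refine ne_zero_ode s (max K 0) hs.1 z g hz ?_ ?_ hz0.ne'
    · intro t ht
      have : t ∈ Icc (0:ℝ) T := ⟨ht.1, ht.2.trans hs.2⟩
      exact le_trans (by simpa [Real.norm_eq_abs] using hK t this) (le_max_left _ _)
    · exact fun t ht => heq t ⟨ht.1, ht.2.trans hs.2⟩
  by_contra h
  push_neg at h
  have hzT : z T < 0 := lt_of_le_of_ne h (hne T ⟨hT, le_refl T⟩)
  have hcz : ContinuousOn z (Icc 0 T) := hz.continuous.continuousOn
  have := intermediate_value_Icc' hT hcz (a := 0) (b := T)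
  have h0 : (0:ℝ) ∈ Icc (z T) (z 0) := ⟨hzT.le, hz0.le⟩
  obtain ⟨c, hc, hc0⟩ := this h0
  exact hne c hc hc0

/-- **Positivity of solutions of system (2).**
System (2) is x' = b·x·(1 − x − c·y), y' = y·(1/(1+k·x) − y − a·x − m·x·y)
with positive parameters a, b, c, k, m.  If the initial data are positive,
then the solution stays positive for all t ≥ 0. -/
theorem positivity_of_solutions
    (a b c k m : ℝ) (ha : 0 < a) (hb : 0 < b) (hc : 0 < c)
    (hk : 0 < k) (hm : 0 < m) (x y : ℝ → ℝ)
    (hx : Differentiable ℝ x) (hy : Differentiable ℝ y)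
    (hxeq : ∀ t ≥ (0 : ℝ), deriv x t = b * x t * (1 - x t - c * y t))
    (hyeq : ∀ t ≥ (0 : ℝ), deriv y t =
      y t * (1 / (1 + k * x t) - y t - a * x t - m * x t * y t))
    (hx0 : 0 < x 0) (hy0 : 0 < y 0) :
    ∀ t ≥ (0 : ℝ), 0 < x t ∧ 0 < y t := by
  have hxpos : ∀ t ≥ (0:ℝ), 0 < x t := by
    intro t ht
    refine pos_ode t ht x (fun u => b * (1 - x u - c * y u)) hx ?_ ?_ hx0
    · exact (continuous_const.mul ((continuous_const.sub hx.continuous).sub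
        (continuous_const.mul hy.continuous))).continuousOn
    · intro u hu
      rw [hxeq u hu.1]; ring
  intro t ht
  refine ⟨hxpos t ht, ?_⟩
  refine pos_ode t ht y
    (fun u => 1 / (1 + k * x u) - y u - a * x u - m * x u * y u) hy ?_ ?_ hy0
  · have hne : ∀ u ∈ Icc (0:ℝ) t, (1 + k * x u) ≠ 0 := by
      intro u hu
      have := hxpos u hu.1
      positivity
    exact (((continuousOn_const.div
        (continuous_const.add (continuous_const.mul hx.continuous)).continuousOn hne).sub
        hy.continuous.continuousOn).sub
        (continuous_const.mul hx.continuous).continuousOn).sub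
        ((continuous_const.mul hx.continuous).mul hy.continuous).continuousOn
  · intro u hu
    rw [hyeq u hu.1]
end

section
/- Let a, b > 0 and let x : ℝ → ℝ be differentiable with x(t) > 0 for all t ≥ 0. If x'(t) ≤ x(t)·(a − b·x(t)) for all t ≥ 0, then limsup_{t→∞} x(t) ≤ a/b. -/
open Filter

/-- **Comparison lemma (upper bound).**
If a, b > 0, x is differentiable and positive on [0,∞), and
x'(t) ≤ x(t)·(a − b·x(t)) for all t ≥ 0, then limsup_{t→∞} x(t) ≤ a/b. -/
theorem limsup_le_of_logistic_upper
    (a b : ℝ) (ha : 0 < a) (hb : 0 < b) (x : ℝ → ℝ)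
    (hx : Differentiable ℝ x) (hpos : ∀ t ≥ (0 : ℝ), 0 < x t)
    (hineq : ∀ t ≥ (0 : ℝ), deriv x t ≤ x t * (a - b * x t)) :
    Filter.limsup x Filter.atTop ≤ a / b := by
  have hcobdd : IsCoboundedUnder (· ≤ ·) atTop x := by
    apply isCoboundedUnder_le_of_eventually_le (x := (0:ℝ)) atTop
    filter_upwards [eventually_ge_atTop (0:ℝ)] with t ht
    exact (hpos t ht).le
  -- enough to show limsup ≤ a/b + ε for each ε > 0
  refine le_of_forall_pos_le_add fun ε hε => ?_
  set c : ℝ := a / b + ε with hc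
  have hcpos : 0 < c := by positivity
  have habc : a - b * c < 0 := by
    have : b * c = a + b * ε := by
      rw [hc, mul_add, mul_div_cancel₀ a hb.ne']
    rw [this]; nlinarith
  -- invariance: if x t0 ≤ c for some t0 ≥ 0 then x t ≤ c for all t ≥ t0
  have hinv : ∀ t0 ≥ (0:ℝ), x t0 ≤ c → ∀ t ≥ t0, x t ≤ c := by
    intro t0 ht0 hxt0 t ht
    have := image_le_of_deriv_right_lt_deriv_boundary (f := x) (f' := deriv x)
      (a := t0) (b := t) (B := fun _ => c) (B' := fun _ => 0)
      (hx.continuous.continuousOn)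
      (fun s hs => (hx s).hasDerivAt.hasDerivWithinAt) hxt0
      (fun s => hasDerivAt_const s c)
      (fun s hs hsc => by
        have hs0 : (0:ℝ) ≤ s := le_trans ht0 hs.1
        calc deriv x s ≤ x s * (a - b * x s) := hineq s hs0
          _ = c * (a - b * c) := by rw [hsc]
          _ < 0 := mul_neg_of_pos_of_neg hcpos habc)
    exact this ⟨ht, le_rfl⟩
  -- there must exist t0 ≥ 0 with x t0 ≤ c
  have hex : ∃ t0 ≥ (0:ℝ), x t0 ≤ c := by
    by_contra h
    push_neg at h
    -- x t > c for all t ≥ 0, so deriv ≤ -δ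
    set δ : ℝ := c * (b * ε) with hδ
    have hδpos : 0 < δ := by positivity
    have hderiv : ∀ t ≥ (0:ℝ), deriv x t ≤ -δ := by
      intro t ht
      have hxc : c < x t := h t ht
      have h1 : a - b * x t ≤ -(b * ε) := by
        have : b * c = a + b * ε := by rw [hc, mul_add, mul_div_cancel₀ a hb.ne']
        nlinarith
      calc deriv x t ≤ x t * (a - b * x t) := hineq t ht
        _ ≤ x t * (-(b * ε)) := by
            apply mul_le_mul_of_nonneg_left h1 (hpos t ht).le
        _ ≤ c * (-(b * ε)) := by nlinarith
        _ = -δ := by ring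
    -- then x T ≤ x 0 - δ T, contradiction for large T
    set T : ℝ := (x 0 + 1) / δ with hT
    have hx0 : 0 < x 0 := hpos 0 le_rfl
    have hTpos : 0 < T := div_pos (by linarith) hδpos
    have hanti : AntitoneOn (fun t => x t + δ * t) (Set.Ici 0) := by
      have hdiff : Differentiable ℝ (fun t => x t + δ * t) :=
        hx.add ((differentiable_id.const_mul δ))
      apply antitoneOn_of_deriv_nonpos (convex_Ici 0)
        hdiff.continuous.continuousOn
        (fun t _ => (hdiff t).differentiableWithinAt)
      intro t ht
      rw [interior_Ici] at ht
      have hd : HasDerivAt (fun t => x t + δ * t) (deriv x t + δ) t := by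
        have h2 : HasDerivAt (fun t : ℝ => δ * t) (δ * 1) t := (hasDerivAt_id t).const_mul δ
        exact ((hx t).hasDerivAt.add h2).congr_deriv (by ring)
      rw [hd.deriv]
      have := hderiv t ht.le
      linarith
    have := hanti (Set.mem_Ici.2 le_rfl) (Set.mem_Ici.2 hTpos.le) hTpos.le
    simp only at this
    have hxT : 0 < x T := hpos T hTpos.le
    have : x T + δ * T ≤ x 0 + δ * 0 := this
    have hδT : δ * T = x 0 + 1 := by
      rw [hT, mul_div_cancel₀ _ hδpos.ne']
    nlinarith
  obtain ⟨t0, ht0, hxt0⟩ := hex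
  apply limsup_le_of_le hcobdd
  filter_upwards [eventually_ge_atTop t0] with t ht
  exact hinv t0 ht0 hxt0 t ht
end

section
/- Consider system (2) with parameters a,b,c,k,m > 0. If x,y : ℝ → ℝ are differentiable, satisfy x'(t) = F(x(t),y(t)) and y'(t) = G(x(t),y(t)) for all t ≥ 0, and x(t) > 0, y(t) > 0 for all t ≥ 0, then limsup_{t→∞} x(t) ≤ 1 and limsup_{t→∞} y(t) ≤ 1. -/
open Filter Set

/-- If `f` is positive on `[0,∞)` and its derivative is `≤ -δ` whenever `f ≥ 1+ε`,
then eventually `f ≤ 1+ε`. -/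
lemma eventually_le_of_decay (ε δ : ℝ) (hε : 0 < ε) (hδ : 0 < δ)
    (f : ℝ → ℝ) (hf : Differentiable ℝ f)
    (hpos : ∀ t ≥ (0 : ℝ), 0 < f t)
    (hd : ∀ t ≥ (0 : ℝ), 1 + ε ≤ f t → deriv f t ≤ -δ) :
    ∀ᶠ t in atTop, f t ≤ 1 + ε := by
  -- Step 1: some point with f ≤ 1 + ε
  have step1 : ∃ t0 ≥ (0 : ℝ), f t0 ≤ 1 + ε := by
    by_contra h
    push_neg at h
    set g : ℝ → ℝ := fun t => f t + δ * t with hg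
    have hganti : AntitoneOn g (Set.Ici 0) := by
      apply antitoneOn_of_deriv_nonpos (convex_Ici 0)
      · exact (hf.continuous.add (continuous_const.mul continuous_id)).continuousOn
      · exact fun t _ => ((hf t).add ((differentiable_id.const_mul δ) t)).differentiableWithinAt
      · intro t ht
        rw [interior_Ici] at ht
        have hdg : deriv g t = deriv f t + δ := by
          have h1 : HasDerivAt g (deriv f t + δ * 1) t :=
            (hf t).hasDerivAt.add ((hasDerivAt_id t).const_mul δ)
          simpa using h1.deriv
        have := hd t ht.le (h t ht.le).le
        rw [hdg]; linarith
    set T : ℝ := f 0 / δ with hT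
    have hT0 : 0 ≤ T := div_nonneg (hpos 0 le_rfl).le hδ.le
    have := hganti (Set.mem_Ici.mpr le_rfl) (Set.mem_Ici.mpr hT0) hT0
    have hfT : f T + δ * T ≤ f 0 + δ * 0 := this
    have hδT : δ * T = f 0 := by
      rw [hT]; field_simp
    have := hpos T hT0
    linarith
  obtain ⟨t0, ht0, hft0⟩ := step1
  -- Step 2: invariance
  have step2 : ∀ t ≥ t0, f t ≤ 1 + ε := by
    intro t1 ht1
    by_contra hgt
    push_neg at hgt
    have ht0t1 : t0 < t1 := by
      rcases lt_or_eq_of_le ht1 with h | h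
      · exact h
      · exfalso; rw [← h] at hgt; linarith
    set S : Set ℝ := Set.Icc t0 t1 ∩ f ⁻¹' Set.Iic (1 + ε) with hS
    have hSne : t0 ∈ S := ⟨⟨le_rfl, ht1⟩, hft0⟩
    have hSclosed : IsClosed S :=
      isClosed_Icc.inter (isClosed_Iic.preimage hf.continuous)
    have hSbdd : BddAbove S := BddAbove.mono Set.inter_subset_left bddAbove_Icc
    set s : ℝ := sSup S with hs_def
    have hsS : s ∈ S := hSclosed.csSup_mem ⟨t0, hSne⟩ hSbdd
    have hfs : f s ≤ 1 + ε := hsS.2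
    have hst1 : s < t1 := by
      rcases lt_or_eq_of_le hsS.1.2 with h | h
      · exact h
      · exfalso; rw [h] at hfs; linarith
    have hmid : ∀ u ∈ Set.Ioc s t1, 1 + ε < f u := by
      intro u hu
      by_contra hle
      push_neg at hle
      have huS : u ∈ S := ⟨⟨le_trans hsS.1.1 hu.1.le, hu.2⟩, hle⟩
      exact absurd (le_csSup hSbdd huS) (not_le.mpr hu.1)
    have hanti : StrictAntiOn f (Set.Icc s t1) := by
      apply strictAntiOn_of_deriv_neg (convex_Icc s t1) hf.continuous.continuousOn
      intro u hu
      rw [interior_Icc] at hu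
      have hu0 : (0 : ℝ) ≤ u := le_trans ht0 (le_trans hsS.1.1 hu.1.le)
      have := hd u hu0 (hmid u ⟨hu.1, hu.2.le⟩).le
      linarith
    have := hanti (Set.left_mem_Icc.mpr hst1.le) (Set.right_mem_Icc.mpr hst1.le) hst1
    linarith
  filter_upwards [eventually_ge_atTop t0] with t ht using step2 t ht

lemma limsup_le_one_of_forall_eps (f : ℝ → ℝ)
    (hpos : ∀ t ≥ (0 : ℝ), 0 < f t)
    (h : ∀ ε : ℝ, 0 < ε → ∀ᶠ t in atTop, f t ≤ 1 + ε) :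
    Filter.limsup f Filter.atTop ≤ 1 := by
  have hcob : Filter.IsCoboundedUnder (· ≤ ·) Filter.atTop f := by
    apply Filter.isCoboundedUnder_le_of_eventually_le atTop (x := (0 : ℝ))
    filter_upwards [eventually_ge_atTop (0 : ℝ)] with t ht using (hpos t ht).le
  refine le_of_forall_pos_le_add fun ε hε => ?_
  exact Filter.limsup_le_of_le hcob (h ε hε)

/-- **Boundedness of solutions of system (2).**
For positive solutions of x' = b·x·(1 − x − c·y),
y' = y·(1/(1+k·x) − y − a·x − m·x·y) with a,b,c,k,m > 0, we have
limsup_{t→∞} x(t) ≤ 1 and limsup_{t→∞} y(t) ≤ 1. -/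
theorem limsup_le_one_of_system
    (a b c k m : ℝ) (ha : 0 < a) (hb : 0 < b) (hc : 0 < c)
    (hk : 0 < k) (hm : 0 < m) (x y : ℝ → ℝ)
    (hx : Differentiable ℝ x) (hy : Differentiable ℝ y)
    (hxeq : ∀ t ≥ (0 : ℝ), deriv x t = b * x t * (1 - x t - c * y t))
    (hyeq : ∀ t ≥ (0 : ℝ), deriv y t =
      y t * (1 / (1 + k * x t) - y t - a * x t - m * x t * y t))
    (hxpos : ∀ t ≥ (0 : ℝ), 0 < x t) (hypos : ∀ t ≥ (0 : ℝ), 0 < y t) :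
    Filter.limsup x Filter.atTop ≤ 1 ∧ Filter.limsup y Filter.atTop ≤ 1 := by
  constructor
  · apply limsup_le_one_of_forall_eps x hxpos
    intro ε hε
    apply eventually_le_of_decay ε (b * ε * (1 + ε)) hε
      (by positivity) x hx hxpos
    intro t ht hxt
    rw [hxeq t ht]
    have hyt := hypos t ht
    have hxt0 := hxpos t ht
    nlinarith [mul_nonneg (mul_nonneg hb.le hxt0.le) (mul_nonneg hc.le hyt.le),
      mul_nonneg (mul_nonneg hb.le hxt0.le) (by linarith : (0:ℝ) ≤ x t - 1 - ε),
      mul_le_mul_of_nonneg_left hxt (mul_pos hb hε).le]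
  · apply limsup_le_one_of_forall_eps y hypos
    intro ε hε
    apply eventually_le_of_decay ε (ε * (1 + ε)) hε (by positivity) y hy hypos
    intro t ht hyt
    rw [hyeq t ht]
    have hxt := hxpos t ht
    have hyt0 := hypos t ht
    have hdenom : (1 : ℝ) < 1 + k * x t := by nlinarith
    have hfrac : 1 / (1 + k * x t) ≤ 1 := by
      rw [div_le_one (by linarith)]; linarith
    nlinarith [mul_nonneg (mul_nonneg ha.le hxt.le) hyt0.le,
      mul_nonneg (mul_nonneg (mul_nonneg hm.le hxt.le) hyt0.le) hyt0.le,
      mul_pos hyt0 hε]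
end

section
/- Consider system (2) with parameters a,b,c,k,m > 0 and assume 0 < c < 1. If x,y : ℝ → ℝ are differentiable, satisfy x'(t) = F(x(t),y(t)) and y'(t) = G(x(t),y(t)) for all t ≥ 0, and x(t) > 0, y(t) > 0 for all t ≥ 0, then liminf_{t→∞} x(t) ≥ 1 − c. -/
open Filter

/-- Upper barrier lemma: if `f A ≤ μ` and whenever `f = μ` on `[A,∞)` the derivative is
negative, then `f ≤ μ` on `[A,∞)`. -/
lemma barrier_le (f : ℝ → ℝ) (hf : Differentiable ℝ f) {μ A : ℝ} (hfa : f A ≤ μ)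
    (hd : ∀ s, A ≤ s → f s = μ → deriv f s < 0) : ∀ t, A ≤ t → f t ≤ μ := by
  intro t ht
  have := image_le_of_deriv_right_lt_deriv_boundary (f := f) (f' := deriv f) (a := A) (b := t)
    hf.continuous.continuousOn
    (fun s _ => (hf s).hasDerivAt.hasDerivWithinAt)
    (B := fun _ => μ) (B' := fun _ => 0) hfa (fun _ => hasDerivAt_const _ _)
    (fun s hs h => hd s hs.1 h)
  exact this ⟨ht, le_refl t⟩

/-- Lower barrier lemma. -/
lemma barrier_ge (f : ℝ → ℝ) (hf : Differentiable ℝ f) {μ A : ℝ} (hfa : μ ≤ f A)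
    (hd : ∀ s, A ≤ s → f s = μ → 0 < deriv f s) : ∀ t, A ≤ t → μ ≤ f t := by
  intro t ht
  have h := barrier_le (fun s => -f s) hf.neg (μ := -μ) (A := A)
    (by simpa using hfa)
    (fun s hs hfs => by
      have h1 : f s = μ := neg_injective (by simpa using hfs)
      have h2 : deriv (fun s => -f s) s = -deriv f s := deriv.neg
      rw [h2, neg_lt_zero]
      exact hd s hs h1) t ht
  have : -f t ≤ -μ := h
  linarith

set_option maxHeartbeats 1000000 in
/-- **Persistence of the first species in system (2).**
For positive solutions of x' = b·x·(1 − x − c·y),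
y' = y·(1/(1+k·x) − y − a·x − m·x·y) with a,b,c,k,m > 0 and 0 < c < 1,
we have liminf_{t→∞} x(t) ≥ 1 − c. -/
theorem liminf_x_ge_of_system
    (a b c k m : ℝ) (ha : 0 < a) (hb : 0 < b) (hc : 0 < c) (hc1 : c < 1)
    (hk : 0 < k) (hm : 0 < m) (x y : ℝ → ℝ)
    (hx : Differentiable ℝ x) (hy : Differentiable ℝ y)
    (hxeq : ∀ t ≥ (0 : ℝ), deriv x t = b * x t * (1 - x t - c * y t))
    (hyeq : ∀ t ≥ (0 : ℝ), deriv y t =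
      y t * (1 / (1 + k * x t) - y t - a * x t - m * x t * y t))
    (hxpos : ∀ t ≥ (0 : ℝ), 0 < x t) (hypos : ∀ t ≥ (0 : ℝ), 0 < y t) :
    1 - c ≤ Filter.liminf x Filter.atTop := by
  -- upper bound on x, for coboundedness
  set M : ℝ := max (x 0) 1 with hM
  have hM1 : (1:ℝ) ≤ M := le_max_right _ _
  have hxM : ∀ t, (0:ℝ) ≤ t → x t ≤ M := by
    refine barrier_le x hx (le_max_left _ _) ?_
    intro s hs hxs
    rw [hxeq s hs, hxs]
    have hys := hypos s hs
    have hcy : 0 < c * y s := mul_pos hc hys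
    exact mul_neg_of_pos_of_neg (mul_pos hb (by linarith)) (by linarith)
  have hcob : IsCoboundedUnder (· ≥ ·) atTop x :=
    isCoboundedUnder_ge_of_eventually_le atTop
      (x := M) (by filter_upwards [eventually_ge_atTop (0:ℝ)] with t ht using hxM t ht)
  -- main eventual lower bound
  have key : ∀ r : ℝ, r < 1 - c → ∀ᶠ t in atTop, r ≤ x t := by
    intro r hr
    rcases le_or_gt r 0 with hr0 | hr0
    · filter_upwards [eventually_ge_atTop (0:ℝ)] with t ht
      exact hr0.trans (hxpos t ht).le
    -- r > 0 case
    set ε : ℝ := (1 - c - r) / (2 * c) with hε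
    have hεpos : 0 < ε := by
      apply div_pos <;> linarith
    set L : ℝ := 1 - c * (1 + ε) with hL
    have hLr : r < L := by
      have hce : c * ε = (1 - c - r) / 2 := by
        rw [hε]; field_simp
      simp only [hL]; nlinarith
    -- Step A : ∃ T ≥ 0, y T ≤ 1 + ε
    have stepA : ∃ T : ℝ, 0 ≤ T ∧ y T ≤ 1 + ε := by
      by_contra hcon
      push_neg at hcon
      have hbig : ∀ t, 0 ≤ t → 1 + ε < y t := fun t ht => hcon t ht
      set C : ℝ := ε * (1 + ε) with hC
      have hCpos : 0 < C := by positivity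
      have hderiv : ∀ t ∈ interior (Set.Ici (0:ℝ)), deriv y t ≤ -C := by
        intro t ht
        rw [interior_Ici] at ht
        have ht0 : (0:ℝ) ≤ t := le_of_lt ht
        rw [hyeq t ht0]
        have hxt := hxpos t ht0
        have hyt := hbig t ht0
        have hytpos : (0:ℝ) < y t := by linarith
        have hinv : 1 / (1 + k * x t) ≤ 1 := by
          rw [div_le_one (by nlinarith)]; nlinarith
        have hinner : 1 / (1 + k * x t) - y t - a * x t - m * x t * y t ≤ -ε := by
          nlinarith [mul_pos ha hxt, mul_pos (mul_pos hm hxt) hytpos]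
        have e1 : y t * (1 / (1 + k * x t) - y t - a * x t - m * x t * y t) ≤ y t * (-ε) :=
          mul_le_mul_of_nonneg_left hinner hytpos.le
        have e2 : y t * (-ε) ≤ (1 + ε) * (-ε) := by nlinarith
        nlinarith
      have hy0 := hypos 0 le_rfl
      have ht1pos : 0 < y 0 / C := div_pos hy0 hCpos
      have := (convex_Ici (0:ℝ)).image_sub_le_mul_sub_of_deriv_le
        hy.continuous.continuousOn (hy.differentiableOn) hderiv
        0 (Set.self_mem_Ici) (y 0 / C + 1) (Set.mem_Ici.mpr (by linarith))
        (by linarith)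
      have hyT := hypos (y 0 / C + 1) (by linarith)
      have hdiv : C * (y 0 / C) = y 0 := by field_simp
      nlinarith
    obtain ⟨T, hT0, hyT⟩ := stepA
    -- Step B : y stays ≤ 1 + ε after T
    have stepB : ∀ t, T ≤ t → y t ≤ 1 + ε := by
      refine barrier_le y hy hyT ?_
      intro s hs hys
      have hs0 : (0:ℝ) ≤ s := hT0.trans hs
      rw [hyeq s hs0, hys]
      have hxt := hxpos s hs0
      have hinv : 1 / (1 + k * x s) < 1 := by
        rw [div_lt_one (by nlinarith)]; nlinarith
      refine mul_neg_of_pos_of_neg (by linarith) ?_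
      nlinarith [mul_pos ha hxt, mul_pos (mul_pos hm hxt) (show (0:ℝ) < 1 + ε by linarith)]
    -- Step C : x stays above μ := min (x T) r after T
    set μ : ℝ := min (x T) r with hμdef
    have hμpos : 0 < μ := lt_min (hxpos T hT0) hr0
    have hμr : μ ≤ r := min_le_right _ _
    have stepC : ∀ t, T ≤ t → μ ≤ x t := by
      refine barrier_ge x hx (min_le_left _ _) ?_
      intro s hs hxs
      have hs0 : (0:ℝ) ≤ s := hT0.trans hs
      rw [hxeq s hs0, hxs]
      have hyb := stepB s hs
      have hcy : c * y s ≤ c * (1 + ε) := mul_le_mul_of_nonneg_left hyb hc.le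
      exact mul_pos (mul_pos hb hμpos) (by simp only [hL] at hLr ⊢; linarith)
    -- Step D : x reaches r at some T' ≥ T
    have stepD : ∃ T', T ≤ T' ∧ r ≤ x T' := by
      by_contra hcon
      push_neg at hcon
      have hsmall : ∀ t, T ≤ t → x t < r := fun t ht => hcon t ht
      set δ : ℝ := b * μ * (L - r) with hδ
      have hδpos : 0 < δ := mul_pos (mul_pos hb hμpos) (by linarith)
      have hderiv : ∀ t ∈ interior (Set.Ici T), δ ≤ deriv x t := by
        intro t ht
        rw [interior_Ici] at ht
        have htT : T ≤ t := le_of_lt ht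
        have ht0 : (0:ℝ) ≤ t := hT0.trans htT
        rw [hxeq t ht0]
        have hxlo := stepC t htT
        have hxhi := hsmall t htT
        have hyb := stepB t htT
        have hxt0 : 0 < x t := lt_of_lt_of_le hμpos hxlo
        have hcy : c * y t ≤ c * (1 + ε) := mul_le_mul_of_nonneg_left hyb hc.le
        have h1 : L - r ≤ 1 - x t - c * y t := by simp only [hL]; linarith
        have h2 : μ * (L - r) ≤ x t * (L - r) :=
          mul_le_mul_of_nonneg_right hxlo (by linarith)
        have h3 : x t * (L - r) ≤ x t * (1 - x t - c * y t) :=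
          mul_le_mul_of_nonneg_left h1 hxt0.le
        calc δ = b * (μ * (L - r)) := by rw [hδ]; ring
        _ ≤ b * (x t * (1 - x t - c * y t)) :=
            mul_le_mul_of_nonneg_left (h2.trans h3) hb.le
        _ = b * x t * (1 - x t - c * y t) := by ring
      have hfrac : 0 ≤ (r - x T) / δ := by
        apply div_nonneg _ hδpos.le
        have := hsmall T le_rfl; linarith
      have hmvt := (convex_Ici T).mul_sub_le_image_sub_of_le_deriv
        hx.continuous.continuousOn hx.differentiableOn hderiv
        T Set.self_mem_Ici (T + (r - x T) / δ + 1) (Set.mem_Ici.mpr (by linarith))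
        (by linarith)
      have hdiv : δ * ((r - x T) / δ) = r - x T := by field_simp
      have hxt1 := hsmall (T + (r - x T) / δ + 1) (by linarith)
      nlinarith
    obtain ⟨T', hTT', hxT'⟩ := stepD
    -- Step E : x stays ≥ r after T'
    have stepE : ∀ t, T' ≤ t → r ≤ x t := by
      refine barrier_ge x hx hxT' ?_
      intro s hs hxs
      have hs0 : (0:ℝ) ≤ s := hT0.trans (hTT'.trans hs)
      rw [hxeq s hs0, hxs]
      have hyb := stepB s (hTT'.trans hs)
      have hcy : c * y s ≤ c * (1 + ε) := mul_le_mul_of_nonneg_left hyb hc.le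
      exact mul_pos (mul_pos hb hr0) (by simp only [hL] at hLr; linarith)
    filter_upwards [eventually_ge_atTop T'] with t ht using stepE t ht
  -- conclude
  refine le_of_forall_lt fun r hr => ?_
  have hmid : r < (r + (1 - c)) / 2 := by linarith
  have h2 : (r + (1 - c)) / 2 < 1 - c := by linarith
  exact lt_of_lt_of_le hmid (le_liminf_of_le hcob (key _ h2))
end

section
/- Consider system (2) with parameters a,b,c,k,m > 0 and assume 0 < a < 1 and 0 < k < 1/a − 1. If x,y : ℝ → ℝ are differentiable, satisfy x'(t) = F(x(t),y(t)) and y'(t) = G(x(t),y(t)) for all t ≥ 0, and x(t) > 0, y(t) > 0 for all t ≥ 0, then liminf_{t→∞} y(t) ≥ (1/(1+k) − a)/(1+m), and this lower bound is positive. -/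
open Filter Set Topology

lemma stay_gt {f : ℝ → ℝ} (hf : Differentiable ℝ f) {c T : ℝ}
    (hT : c < f T)
    (hbar : ∀ t ≥ T, f t = c → 0 < deriv f t) :
    ∀ t ≥ T, c < f t := by
  intro t1 ht1
  by_contra hle
  push_neg at hle
  have hTt1 : T < t1 := by
    rcases eq_or_lt_of_le ht1 with h | h
    · exfalso; rw [← h] at hle; linarith
    · exact h
  set S : Set ℝ := Icc T t1 ∩ {t | f t ≤ c} with hSdef
  have hne : S.Nonempty := ⟨t1, ⟨⟨ht1, le_refl _⟩, hle⟩⟩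
  have hclosed : IsClosed S :=
    isClosed_Icc.inter (isClosed_le hf.continuous continuous_const)
  have hbdd : BddBelow S := ⟨T, fun t ht => ht.1.1⟩
  set s := sInf S with hs
  have hsmem : s ∈ S := hclosed.csInf_mem hne hbdd
  have hfs : f s ≤ c := hsmem.2
  have hTs : T < s := by
    rcases eq_or_lt_of_le hsmem.1.1 with h | h
    · exfalso; rw [← h] at hfs; linarith
    · exact h
  have hlt : ∀ t ∈ Ico T s, c < f t := by
    intro t ht
    by_contra hle'
    push_neg at hle'
    have : t ∈ S := ⟨⟨ht.1, le_trans ht.2.le hsmem.1.2⟩, hle'⟩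
    exact absurd (csInf_le hbdd this) (not_le.mpr ht.2)
  haveI hnb : (𝓝[Ioo T s] s).NeBot := by
    rw [← mem_closure_iff_nhdsWithin_neBot, closure_Ioo (ne_of_lt hTs)]
    exact ⟨hTs.le, le_refl _⟩
  have hfsge : c ≤ f s := by
    have htend : Tendsto f (𝓝[Ioo T s] s) (𝓝 (f s)) :=
      (hf.continuous.continuousAt).continuousWithinAt.tendsto
    refine ge_of_tendsto htend ?_
    filter_upwards [self_mem_nhdsWithin] with t ht
    exact (hlt t ⟨ht.1.le, ht.2⟩).le
  have hfseq : f s = c := le_antisymm hfs hfsge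
  have hd : 0 < deriv f s := hbar s hTs.le hfseq
  have hslope : Tendsto (slope f s) (𝓝[≠] s) (𝓝 (deriv f s)) :=
    hasDerivAt_iff_tendsto_slope.mp (hf s).hasDerivAt
  have hslope' : Tendsto (slope f s) (𝓝[Ioo T s] s) (𝓝 (deriv f s)) :=
    hslope.mono_left (nhdsWithin_mono s (fun t ht => ne_of_lt ht.2))
  have : deriv f s ≤ 0 := by
    refine le_of_tendsto hslope' ?_
    filter_upwards [self_mem_nhdsWithin] with t ht
    rw [slope_def_field]
    apply div_nonpos_of_nonneg_of_nonpos
    · rw [hfseq]; linarith [hlt t ⟨ht.1.le, ht.2⟩]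
    · linarith [ht.2]
  linarith

lemma stay_lt {f : ℝ → ℝ} (hf : Differentiable ℝ f) {c T : ℝ}
    (hT : f T < c)
    (hbar : ∀ t ≥ T, f t = c → deriv f t < 0) :
    ∀ t ≥ T, f t < c := by
  intro t ht
  have key := stay_gt (f := fun u => -f u) hf.neg (c := -c) (T := T)
    (by show -c < -f T; linarith) ?_ t ht
  · simpa using key
  · intro u hu hfu
    have hfu' : f u = c := by
      have : -f u = -c := hfu
      linarith
    have hd : deriv (fun u => -f u) u = -deriv f u := deriv.neg
    rw [hd]
    linarith [hbar u hu hfu']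

lemma exists_gt {f : ℝ → ℝ} (hf : Differentiable ℝ f) {c T δ : ℝ} (hδ : 0 < δ)
    (h : ∀ t ≥ T, f t ≤ c → δ ≤ deriv f t) :
    ∃ t, T ≤ t ∧ c < f t := by
  by_contra hcon
  push_neg at hcon
  set g : ℝ → ℝ := fun t => f t - δ * t with hg
  have hgd : Differentiable ℝ g := hf.sub (differentiable_id.const_mul δ)
  have hgderiv : ∀ t, deriv g t = deriv f t - δ := by
    intro t
    have : HasDerivAt g (deriv f t - δ) t := by
      have h' := ((hf t).hasDerivAt.sub ((hasDerivAt_id t).const_mul δ))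
      rw [mul_one] at h'
      exact h'
    exact this.deriv
  have hmono : MonotoneOn g (Ici T) := by
    apply monotoneOn_of_deriv_nonneg (convex_Ici T) hgd.continuous.continuousOn
      hgd.differentiableOn
    intro t ht
    rw [interior_Ici] at ht
    rw [hgderiv]
    have := h t ht.le (hcon t ht.le)
    linarith
  have hpos : 0 < (c - f T + 1) / δ := by
    apply div_pos _ hδ
    have := hcon T (le_refl T)
    linarith
  set t1 : ℝ := T + (c - f T + 1) / δ with ht1def
  have ht1 : T ≤ t1 := by rw [ht1def]; linarith
  have := hmono (self_mem_Ici) (mem_Ici.mpr ht1) ht1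
  have hcalc : δ * ((c - f T + 1) / δ) = c - f T + 1 := by
    field_simp
  have hft1 : c + 1 ≤ f t1 := by
    simp only [hg, ht1def] at this
    nlinarith [this]
  linarith [hcon t1 ht1]

lemma exists_lt {f : ℝ → ℝ} (hf : Differentiable ℝ f) {c T δ : ℝ} (hδ : 0 < δ)
    (h : ∀ t ≥ T, c ≤ f t → deriv f t ≤ -δ) :
    ∃ t, T ≤ t ∧ f t < c := by
  have haux : ∀ t ≥ T, (fun u => -f u) t ≤ -c → δ ≤ deriv (fun u => -f u) t := by
    intro t ht hle
    have hd : deriv (fun u => -f u) t = -deriv f t := deriv.neg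
    rw [hd]
    have hle' : -f t ≤ -c := hle
    have : c ≤ f t := by linarith
    linarith [h t ht this]
  obtain ⟨t, ht, hlt⟩ := exists_gt (f := fun u => -f u) hf.neg (c := -c) (T := T) hδ haux
  have hlt' : -c < -f t := hlt
  exact ⟨t, ht, by linarith⟩

/-- **Persistence of the second species in system (2).**
For positive solutions of x' = b·x·(1 − x − c·y),
y' = y·(1/(1+k·x) − y − a·x − m·x·y) with a,b,c,k,m > 0, 0 < a < 1 and
0 < k < 1/a − 1, we have liminf_{t→∞} y(t) ≥ (1/(1+k) − a)/(1+m),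
and this lower bound is positive. -/
theorem liminf_y_ge_of_system
    (a b c k m : ℝ) (ha : 0 < a) (ha1 : a < 1) (hb : 0 < b) (hc : 0 < c)
    (hk : 0 < k) (hk1 : k < 1 / a - 1) (hm : 0 < m) (x y : ℝ → ℝ)
    (hx : Differentiable ℝ x) (hy : Differentiable ℝ y)
    (hxeq : ∀ t ≥ (0 : ℝ), deriv x t = b * x t * (1 - x t - c * y t))
    (hyeq : ∀ t ≥ (0 : ℝ), deriv y t =
      y t * (1 / (1 + k * x t) - y t - a * x t - m * x t * y t))
    (hxpos : ∀ t ≥ (0 : ℝ), 0 < x t) (hypos : ∀ t ≥ (0 : ℝ), 0 < y t) :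
    (1 / (1 + k) - a) / (1 + m) ≤ Filter.liminf y Filter.atTop ∧
      0 < (1 / (1 + k) - a) / (1 + m) := by
  have hden : (0:ℝ) < 1 + k := by linarith
  have hak : a * (1 + k) < 1 := by
    have h1 : 1 + k < 1 / a := by linarith
    calc a * (1+k) < a * (1/a) := by exact mul_lt_mul_of_pos_left h1 ha
    _ = 1 := by field_simp
  have haL : a < 1 / (1 + k) := (lt_div_iff₀ hden).mpr (by linarith)
  have hLpos : 0 < (1 / (1 + k) - a) / (1 + m) := div_pos (by linarith) (by linarith)
  refine ⟨?_, hLpos⟩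
  -- Step 1: for every ε > 0, eventually x < 1 + ε
  have hxev : ∀ ε > (0:ℝ), ∃ T ≥ (0:ℝ), ∀ t ≥ T, x t < 1 + ε := by
    intro ε hε
    have hdesc : ∀ t ≥ (0:ℝ), (1:ℝ) + ε ≤ x t → deriv x t ≤ -(b * ε * (1+ε)) := by
      intro t ht hxt
      rw [hxeq t ht]
      have hxp := hxpos t ht
      have hyp := hypos t ht
      have hq : (0:ℝ) ≤ (x t - (1+ε)) * (x t + ε) :=
        mul_nonneg (by linarith) (by linarith)
      nlinarith [mul_nonneg hb.le hq, mul_pos (mul_pos hb hxp) (mul_pos hc hyp)]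
    obtain ⟨T, hT0, hxT⟩ := exists_lt hx (by positivity) hdesc
    refine ⟨T, hT0, stay_lt hx hxT ?_⟩
    intro t ht hxt
    have ht0 : (0:ℝ) ≤ t := le_trans hT0 ht
    rw [hxeq t ht0, hxt]
    have hyp := hypos t ht0
    have hbr : 1 - (1+ε) - c * y t < 0 := by nlinarith [mul_pos hc hyp]
    exact mul_neg_of_pos_of_neg (by positivity) hbr
  -- Step 2: eventually y < 2
  have hone : ∀ t ≥ (0:ℝ), 1 / (1 + k * x t) ≤ 1 := by
    intro t ht
    have hxp := hxpos t ht
    rw [div_le_one (by nlinarith)]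
    nlinarith
  have hy2 : ∃ T ≥ (0:ℝ), ∀ t ≥ T, y t < 2 := by
    have hdesc : ∀ t ≥ (0:ℝ), (2:ℝ) ≤ y t → deriv y t ≤ -2 := by
      intro t ht hyt
      rw [hyeq t ht]
      have hxp := hxpos t ht
      have hyp := hypos t ht
      have h1 := hone t ht
      have hbr : 1 / (1 + k * x t) - y t - a * x t - m * x t * y t ≤ 1 - y t := by
        nlinarith [mul_pos ha hxp, mul_pos (mul_pos hm hxp) hyp]
      have h2 := mul_le_mul_of_nonneg_left hbr hyp.le
      nlinarith [mul_nonneg (by linarith : (0:ℝ) ≤ y t - 2) (by linarith : (0:ℝ) ≤ y t + 1)]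
    obtain ⟨T, hT0, hyT⟩ := exists_lt hy (by norm_num) hdesc
    refine ⟨T, hT0, stay_lt hy hyT ?_⟩
    intro t ht hyt
    have ht0 : (0:ℝ) ≤ t := le_trans hT0 ht
    rw [hyeq t ht0, hyt]
    have hxp := hxpos t ht0
    have h1 := hone t ht0
    have hbr : 1 / (1 + k * x t) - 2 - a * x t - m * x t * 2 < 0 := by
      nlinarith [mul_pos ha hxp, mul_pos hm hxp]
    nlinarith
  -- Step 3: the key eventual lower bound
  have hkey : ∀ r < (1 / (1 + k) - a) / (1 + m), ∀ᶠ t in Filter.atTop, r ≤ y t := by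
    intro r hr
    rcases le_or_gt r 0 with hr0 | hr0
    · rw [Filter.eventually_atTop]
      exact ⟨0, fun t ht => le_of_lt (lt_of_le_of_lt hr0 (hypos t ht))⟩
    obtain ⟨g, hgdef⟩ : ∃ g : ℝ → ℝ,
        g = fun ε => (1/(1 + k*(1+ε)) - a*(1+ε))/(1 + m*(1+ε)) := ⟨_, rfl⟩
    have hg0 : g 0 = (1 / (1 + k) - a) / (1 + m) := by rw [hgdef]; norm_num
    have hgc : ContinuousAt g 0 := by
      rw [hgdef]
      apply ContinuousAt.div
      · apply ContinuousAt.sub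
        · exact ContinuousAt.div continuousAt_const (by fun_prop)
            (ne_of_gt (by nlinarith : (0:ℝ) < 1 + k*(1+0)))
        · fun_prop
      · fun_prop
      · exact ne_of_gt (by nlinarith : (0:ℝ) < 1 + m*(1+0))
    have hev : ∀ᶠ ε in nhds (0:ℝ), r < g ε :=
      hgc.eventually (eventually_gt_nhds (hg0 ▸ hr))
    have hev' : ∀ᶠ ε in nhdsWithin (0:ℝ) (Ioi 0), r < g ε :=
      hev.filter_mono nhdsWithin_le_nhds
    obtain ⟨ε, hrg, hε⟩ := (hev'.and eventually_mem_nhdsWithin).exists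
    rw [Set.mem_Ioi] at hε
    obtain ⟨T, hT0, hxT⟩ := hxev ε hε
    obtain ⟨K, hKdef⟩ : ∃ K : ℝ, K = 1 + k*(1+ε) := ⟨_, rfl⟩
    obtain ⟨M, hMdef⟩ : ∃ M : ℝ, M = 1 + m*(1+ε) := ⟨_, rfl⟩
    obtain ⟨Lε, hLεdef⟩ : ∃ L : ℝ, L = g ε := ⟨_, rfl⟩
    have hrLε0 : r < Lε := by rw [hLεdef]; exact hrg
    have hε1 : (0:ℝ) < 1 + ε := by linarith
    have h1 : (0:ℝ) < 1 + k*(1+ε) := by linarith [mul_pos hk hε1]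
    have h2 : (0:ℝ) < 1 + m*(1+ε) := by linarith [mul_pos hm hε1]
    have hKpos : 0 < K := by rw [hKdef]; exact h1
    have hMpos : 0 < M := by rw [hMdef]; exact h2
    have hML : M * Lε = 1/K - a*(1+ε) := by
      rw [hLεdef, hgdef, hKdef, hMdef]
      field_simp
    clear hev hev' hgc hg0 hrg hgdef hLεdef
    have hderiv_ge : ∀ t ≥ T, y t * (M * (Lε - y t)) ≤ deriv y t := by
      intro t ht
      have ht0 : (0:ℝ) ≤ t := le_trans hT0 ht
      rw [hyeq t ht0]
      have hxp := hxpos t ht0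
      have hyp := hypos t ht0
      have hxe := hxT t ht
      apply mul_le_mul_of_nonneg_left _ hyp.le
      have hkx : (0:ℝ) < 1 + k * x t := by linarith [mul_pos hk hxp]
      have h1 : 1/K ≤ 1/(1 + k * x t) :=
        one_div_le_one_div_of_le hkx
          (by rw [hKdef]; have := mul_le_mul_of_nonneg_left hxe.le hk.le; linarith)
      have hax : a * x t ≤ a * (1+ε) := mul_le_mul_of_nonneg_left hxe.le ha.le
      have hmxy : m * x t * y t ≤ m * (1+ε) * y t :=
        mul_le_mul_of_nonneg_right (mul_le_mul_of_nonneg_left hxe.le hm.le) hyp.le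
      have hMy : M * y t = y t + m * (1+ε) * y t := by rw [hMdef]; ring
      have hexp : M * (Lε - y t) = M * Lε - M * y t := mul_sub _ _ _
      linarith [hexp, hML, hMy, h1, hax, hmxy]
    have hyTpos := hypos T hT0
    obtain ⟨y0, hy0def⟩ : ∃ v : ℝ, v = min (y T) r / 2 := ⟨_, rfl⟩
    have hminpos : 0 < min (y T) r := lt_min hyTpos hr0
    have hy0pos : 0 < y0 := by rw [hy0def]; linarith
    have hy0T : y0 < y T := by
      have := min_le_left (y T) r
      rw [hy0def]; linarith
    have hy0r : y0 < r := by
      have := min_le_right (y T) r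
      rw [hy0def]; linarith
    have hstay : ∀ t ≥ T, y0 < y t := by
      apply stay_gt hy hy0T
      intro t ht hyt
      have hd := hderiv_ge t ht
      rw [hyt] at hd
      linarith [mul_pos hy0pos (mul_pos hMpos (by linarith : (0:ℝ) < Lε - y0))]
    have hδ : 0 < y0 * M * (Lε - r) :=
      mul_pos (mul_pos hy0pos hMpos) (by linarith)
    have hesc : ∀ t ≥ T, y t ≤ r → y0 * M * (Lε - r) ≤ deriv y t := by
      intro t ht hyr
      have hd := hderiv_ge t ht
      have h2 := hstay t ht
      have e1 : y0 * M * (Lε - r) ≤ y0 * M * (Lε - y t) :=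
        mul_le_mul_of_nonneg_left (by linarith) (mul_nonneg hy0pos.le hMpos.le)
      have e2 : y0 * M * (Lε - y t) ≤ y t * M * (Lε - y t) :=
        mul_le_mul_of_nonneg_right (mul_le_mul_of_nonneg_right h2.le hMpos.le)
          (by linarith)
      have e3 : y t * M * (Lε - y t) = y t * (M * (Lε - y t)) := by ring
      linarith [hd, e1, e2, e3]
    obtain ⟨t1, ht1T, ht1⟩ := exists_gt hy hδ hesc
    have hstay2 : ∀ t ≥ t1, r < y t := by
      apply stay_gt hy ht1
      intro t ht hyt
      have hd := hderiv_ge t (le_trans ht1T ht)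
      rw [hyt] at hd
      linarith [mul_pos hr0 (mul_pos hMpos (by linarith : (0:ℝ) < Lε - r))]
    rw [Filter.eventually_atTop]
    exact ⟨t1, fun t ht => (hstay2 t ht).le⟩
  -- Step 4: conclude
  obtain ⟨T2, hT20, hyT2⟩ := hy2
  have hbdd : Filter.IsBoundedUnder (· ≤ ·) Filter.atTop y :=
    Filter.isBoundedUnder_of_eventually_le
      (Filter.eventually_atTop.mpr ⟨T2, fun t ht => (hyT2 t ht).le⟩)
  have hcob : Filter.IsCoboundedUnder (· ≥ ·) Filter.atTop y := hbdd.isCoboundedUnder_ge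
  by_contra hcon
  push_neg at hcon
  obtain ⟨r, hr1, hr2⟩ := exists_between hcon
  exact absurd (Filter.le_liminf_of_le hcob (hkey r hr2)) (not_le.mpr hr1)
end

section
/- Let a,b,c,k,m > 0, let 0 < x < 1, set y = (1−x)/c, and suppose u(x) = 0 (so (x,y) is a positive equilibrium of system (2)). Then the determinant of the Jacobian J(x,y) of system (2) satisfies det J(x,y) = −(x·(x−1)·b/((k·x+1)·c))·v(x), where v(X) = 3·A1·X² + 2·A2·X + A3 is the derivative of the cubic u. -/
/-- The cubic associated to the positive equilibria of system (2). -/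
noncomputable def ucubic (a c k m X : ℝ) : ℝ :=
  k * m * X ^ 3 + ((-(a * c) - m + 1) * k + m) * X ^ 2 +
    (-(a * c) - k - m + 1) * X + (c - 1)

/-- The derivative v = u' of the associated cubic. -/
noncomputable def vquad (a c k m X : ℝ) : ℝ :=
  3 * (k * m) * X ^ 2 + 2 * ((-(a * c) - m + 1) * k + m) * X +
    (-(a * c) - k - m + 1)

/-- The Jacobian matrix of system (2) at the point (x,y). -/
noncomputable def systemJacobian (a b c k m x y : ℝ) : Matrix (Fin 2) (Fin 2) ℝ :=
  !![-b * (2 * x + c * y - 1), -b * c * x;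
     -y * (k / (1 + k * x) ^ 2 + a + m * y),
       1 / (1 + k * x) - (2 * m * y + a) * x - 2 * y]

/-- **Determinant formula (19) at a positive equilibrium of system (2).**
If 0 < x < 1, y = (1−x)/c and u(x) = 0 (so (x,y) is a positive equilibrium),
then det J(x,y) = −(x·(x−1)·b/((k·x+1)·c))·v(x), where v = u'. -/
theorem det_jacobian_eq_at_positive_equilibrium
    (a b c k m x y : ℝ) (ha : 0 < a) (hb : 0 < b) (hc : 0 < c)
    (hk : 0 < k) (hm : 0 < m) (hx0 : 0 < x) (hx1 : x < 1)
    (hy : y = (1 - x) / c) (hu : ucubic a c k m x = 0) :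
    (systemJacobian a b c k m x y).det =
      -(x * (x - 1) * b / ((k * x + 1) * c)) * vquad a c k m x := by
  have hc0 : c ≠ 0 := hc.ne'
  have hkx : (1 + k * x) ≠ 0 := by positivity
  have hkx' : (k * x + 1) ≠ 0 := by positivity
  subst hy
  rw [systemJacobian, Matrix.det_fin_two_of]
  unfold ucubic at hu
  unfold vquad
  field_simp
  linear_combination (-(1+k)*x*(1+x*k)) * hu
end

section
/- Let a,b,c,k,m > 0, let 0 < x < 1, set y = (1−x)/c, and suppose u(x) = 0 and v(x) < 0. Then det J(x,y) < 0; that is, the positive equilibrium is a (hyperbolic) saddle of system (2). -/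
/-- **A positive equilibrium with v(x) < 0 is a saddle.**
If 0 < x < 1, y = (1−x)/c, u(x) = 0 and v(x) < 0, then det J(x,y) < 0;
that is, the positive equilibrium is a hyperbolic saddle of system (2). -/
theorem positive_equilibrium_saddle
    (a b c k m x y : ℝ) (ha : 0 < a) (hb : 0 < b) (hc : 0 < c)
    (hk : 0 < k) (hm : 0 < m) (hx0 : 0 < x) (hx1 : x < 1)
    (hy : y = (1 - x) / c) (hu : ucubic a c k m x = 0)
    (hv : vquad a c k m x < 0) :
    (systemJacobian a b c k m x y).det < 0 := by
  have hD : (0:ℝ) < 1 + k * x := by positivity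
  have hD' : (1 + k * x) ≠ 0 := ne_of_gt hD
  have hc' : c ≠ 0 := ne_of_gt hc
  have hy0 : 0 < y := by
    rw [hy]; exact div_pos (by linarith) hc
  have key : (systemJacobian a b c k m x y).det * (c * (1 + k * x) ^ 2)
      = b * x * y * (vquad a c k m x) * c * (1 + k * x)
        - b * x * (ucubic a c k m x) * ((1 + k * x) + y * k * c) := by
    subst hy
    simp only [systemJacobian, Matrix.det_fin_two_of, ucubic, vquad]
    field_simp
    ring
  rw [hu] at key
  have hrhs : b * x * y * (vquad a c k m x) * c * (1 + k * x)
      - b * x * 0 * ((1 + k * x) + y * k * c) < 0 := by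
    have h1 : 0 < b * x * y * c * (1 + k * x) := by positivity
    nlinarith [mul_pos (mul_pos (mul_pos (mul_pos hb hx0) hy0) hc) hD]
  rw [← key] at hrhs
  have hpos : 0 < c * (1 + k * x) ^ 2 := by positivity
  nlinarith [hrhs, hpos]
end

section
/- Let a,b,c,k,m > 0, let 0 < x < 1, set y = (1−x)/c, and suppose u(x) = 0 and v(x) > 0. Then det J(x,y) > 0 and trace J(x,y) < 0 (indeed trace J(x,y) = −b·x − y·(1+m·x)); that is, the positive equilibrium is a (hyperbolic) stable node of system (2). -/
/-- **A positive equilibrium with v(x) > 0 is a stable node.**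
If 0 < x < 1, y = (1−x)/c, u(x) = 0 and v(x) > 0, then det J(x,y) > 0 and
trace J(x,y) = −b·x − y·(1+m·x) < 0; that is, the positive equilibrium is a
hyperbolic stable node of system (2). -/
theorem positive_equilibrium_stable_node
    (a b c k m x y : ℝ) (ha : 0 < a) (hb : 0 < b) (hc : 0 < c)
    (hk : 0 < k) (hm : 0 < m) (hx0 : 0 < x) (hx1 : x < 1)
    (hy : y = (1 - x) / c) (hu : ucubic a c k m x = 0)
    (hv : 0 < vquad a c k m x) :
    0 < (systemJacobian a b c k m x y).det ∧
      Matrix.trace (systemJacobian a b c k m x y) = -b * x - y * (1 + m * x) ∧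
      Matrix.trace (systemJacobian a b c k m x y) < 0 := by
  have hq : (0:ℝ) < 1 + k * x := by positivity
  have hy0 : 0 < y := by rw [hy]; exact div_pos (by linarith) hc
  have hcy : c * y = 1 - x := by rw [hy]; field_simp
  simp only [ucubic] at hu
  -- the equilibrium identity: (y + a x + m x y) (1 + k x) = 1
  have hq1c : (y + a * x + m * x * y) * (1 + k * x) * c = 1 * c := by
    linear_combination (-1) * hu + ((1 + m * x) * (1 + k * x)) * hcy
  have hq1 : (y + a * x + m * x * y) * (1 + k * x) = 1 :=
    mul_right_cancel₀ hc.ne' hq1c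
  have hinv : 1 / (1 + k * x) = y + a * x + m * x * y := by
    rw [eq_comm, eq_div_iff hq.ne']; exact hq1
  have hk2 : k / (1 + k * x) ^ 2 = k * (y + a * x + m * x * y) ^ 2 := by
    rw [← hinv]; field_simp
  -- trace formula
  have htr : Matrix.trace (systemJacobian a b c k m x y) = -b * x - y * (1 + m * x) := by
    simp only [systemJacobian]
    rw [Matrix.trace_fin_two_of, hinv]
    linear_combination (-b) * hcy
  -- determinant formula
  have hdet : (systemJacobian a b c k m x y).det =
      b * x * y * vquad a c k m x * (y + a * x + m * x * y) := by
    simp only [systemJacobian, vquad]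
    rw [Matrix.det_fin_two_of, hk2, hinv]
    linear_combination
      (-(b * x * y * k * (y + a * x + m * x * y) ^ 2)) * hu +
      (-(b * x * y) * (((1 + 2 * m * x - m - a * c) - c * k * (y + a * x + m * x * y) ^ 2 -
          (3 * (k * m) * x ^ 2 + 2 * ((-(a * c) - m + 1) * k + m) * x +
            (-(a * c) - k - m + 1)) * (y + a * x + m * x * y)) *
          ((y + a * x + m * x * y) * (1 + k * x) + 1) +
        (y + a * x + m * x * y) ^ 2 *
          (c * k * ((y + a * x + m * x * y) * (1 + k * x) + 1) +
            (3 * (k * m) * x ^ 2 + 2 * ((-(a * c) - m + 1) * k + m) * x +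
              (-(a * c) - k - m + 1)) * (1 + k * x)))) * hq1 +
      (b * y * (1 + m * x) - b * x * y * m) * hcy
  have hs : 0 < y + a * x + m * x * y := by positivity
  refine ⟨?_, htr, ?_⟩
  · rw [hdet]
    exact mul_pos (mul_pos (mul_pos (mul_pos hb hx0) hy0) hv) hs
  · rw [htr]
    nlinarith [mul_pos hy0 (show (0:ℝ) < 1 + m * x by positivity), mul_pos hb hx0]
end

section
/- Let a,b,c,k,m > 0 with 0 < a < 1, 0 < c < 1 and 0 < k < 1/a − 1. Then the cubic u has exactly one root in the open interval (0,1); equivalently, system (2) has exactly one positive equilibrium (x*, y*) with 0 < x* < 1 and y* = (1−x*)/c > 0. -/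
/-- **Unique positive equilibrium in the weak-competition regime.**
If a,b,c,k,m > 0 with 0 < a < 1, 0 < c < 1 and 0 < k < 1/a − 1, then the cubic
u has exactly one root in (0,1); equivalently, system (2) has exactly one
positive equilibrium (x*, y*) with 0 < x* < 1 and y* = (1−x*)/c > 0. -/
theorem unique_positive_equilibrium
    (a b c k m : ℝ) (ha : 0 < a) (ha1 : a < 1) (hb : 0 < b)
    (hc : 0 < c) (hc1 : c < 1) (hk : 0 < k) (hk1 : k < 1 / a - 1) (hm : 0 < m) :
    (∃! x : ℝ, x ∈ Set.Ioo (0 : ℝ) 1 ∧ ucubic a c k m x = 0) ∧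
      (∃! p : ℝ × ℝ, 0 < p.1 ∧ p.1 < 1 ∧ p.2 = (1 - p.1) / c ∧ 0 < p.2 ∧
        b * p.1 * (1 - p.1 - c * p.2) = 0 ∧
        p.2 * (1 / (1 + k * p.1) - p.2 - a * p.1 - m * p.1 * p.2) = 0) := by
  have hk0 : k ≠ 0 := ne_of_gt hk
  have hc0 : c ≠ 0 := ne_of_gt hc
  have hcont : Continuous (ucubic a c k m) := by
    unfold ucubic; continuity
  have hu0 : ucubic a c k m 0 = c - 1 := by simp [ucubic]
  have hu1 : ucubic a c k m 1 = c * (1 - a * (1 + k)) := by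
    simp only [ucubic]; ring
  have hak : a * (1 + k) < 1 := by
    have h1a : a * (1 / a) = 1 := by field_simp
    nlinarith [mul_lt_mul_of_pos_left hk1 ha]
  have hu0neg : ucubic a c k m 0 < 0 := by rw [hu0]; linarith
  have hu1pos : 0 < ucubic a c k m 1 := by rw [hu1]; nlinarith
  -- a root in (0,1)
  obtain ⟨x₀, hx₀mem, hx₀⟩ : ∃ x ∈ Set.Ioo (0:ℝ) 1, ucubic a c k m x = 0 := by
    have h := intermediate_value_Ioo (by norm_num : (0:ℝ) ≤ 1) hcont.continuousOn
    obtain ⟨x, hx, hfx⟩ := h ⟨hu0neg, hu1pos⟩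
    exact ⟨x, hx, hfx⟩
  -- a negative root
  have hunegk : ucubic a c k m (-1/k) = c := by
    unfold ucubic; field_simp; ring
  obtain ⟨r, hrmem, hr⟩ : ∃ r ∈ Set.Ioo (-1/k) (0:ℝ), ucubic a c k m r = 0 := by
    have hle : (-1/k : ℝ) ≤ 0 := by
      have h1 : (0:ℝ) < 1/k := one_div_pos.mpr hk
      have h2 : (-1/k : ℝ) = -(1/k) := by ring
      linarith
    have h := intermediate_value_Ioo' hle hcont.continuousOn
    rw [hu0, hunegk] at h
    obtain ⟨x, hx, hfx⟩ := h ⟨by linarith, hc⟩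
    exact ⟨x, hx, hfx⟩
  have hrneg : r < 0 := hrmem.2
  -- uniqueness of the root in (0,1)
  have huniq : ∀ x₁ x₂, x₁ ∈ Set.Ioo (0:ℝ) 1 → x₂ ∈ Set.Ioo (0:ℝ) 1 →
      ucubic a c k m x₁ = 0 → ucubic a c k m x₂ = 0 → x₁ = x₂ := by
    intro x₁ x₂ hm1 hm2 h1 h2
    by_contra hne
    have hx1 : 0 < x₁ := hm1.1
    have hx2 : 0 < x₂ := hm2.1
    simp only [ucubic] at h1 h2 hr
    have key : ((c - 1) + k * m * (r * x₁ * x₂)) * ((r - x₁) * ((r - x₂) * (x₁ - x₂))) = 0 := by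
      linear_combination (x₁ * x₂ * (x₁ - x₂)) * hr + (-(r * x₂ * (r - x₂))) * h1 +
        (r * x₁ * (r - x₁)) * h2
    have hne1 : r - x₁ ≠ 0 := by intro h; nlinarith [sub_eq_zero.mp h]
    have hne2 : r - x₂ ≠ 0 := by intro h; nlinarith [sub_eq_zero.mp h]
    have hne3 : x₁ - x₂ ≠ 0 := sub_ne_zero.mpr hne
    have hfac : (c - 1) + k * m * (r * x₁ * x₂) = 0 := by
      rcases mul_eq_zero.mp key with h | h
      · exact h
      · exact absurd h (mul_ne_zero hne1 (mul_ne_zero hne2 hne3))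
    have hn : k * m * (r * x₁ * x₂) < 0 :=
      mul_neg_of_pos_of_neg (mul_pos hk hm)
        (mul_neg_of_neg_of_pos (mul_neg_of_neg_of_pos hrneg hx1) hx2)
    linarith
  constructor
  · exact ⟨x₀, ⟨hx₀mem, hx₀⟩, fun y hy => huniq y x₀ hy.1 hx₀mem hy.2 hx₀⟩
  · -- the cubic vs the second equation, for any x ∈ (0,1) with y = (1-x)/c
    have hiden : ∀ x : ℝ, 0 < x → x < 1 →
        ucubic a c k m x = (c * (1 + k * x)) *
          (1 / (1 + k * x) - (1 - x) / c - a * x - m * x * ((1 - x) / c)) := by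
      intro x hx0 hx1
      have hkx : (1 + k * x) ≠ 0 := by
        have h1 := mul_pos hk hx0
        intro h; linarith [h.ge]
      unfold ucubic; field_simp; ring
    have hy₀pos : 0 < (1 - x₀) / c := div_pos (by linarith [hx₀mem.2]) hc
    refine ⟨(x₀, (1 - x₀) / c), ⟨hx₀mem.1, hx₀mem.2, rfl, hy₀pos, ?_, ?_⟩, ?_⟩
    · have : c * ((1 - x₀) / c) = 1 - x₀ := mul_div_cancel₀ _ hc0
      rw [this]; ring
    · have hkx : (c * (1 + k * x₀)) ≠ 0 := by
        have h1 := mul_pos hk hx₀mem.1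
        exact ne_of_gt (mul_pos hc (by linarith))
      have h := hiden x₀ hx₀mem.1 hx₀mem.2
      rw [hx₀] at h
      have hz := (mul_eq_zero.mp h.symm).resolve_left hkx
      simp only [hz, mul_zero]
    · rintro ⟨qx, qy⟩ ⟨hq1, hq2, hq3, hq4, hq5, hq6⟩
      simp only at hq1 hq2 hq3 hq4 hq5 hq6 ⊢
      subst hq3
      have hinner : 1 / (1 + k * qx) - (1 - qx) / c - a * qx - m * qx * ((1 - qx) / c) = 0 :=
        (mul_eq_zero.mp hq6).resolve_left (ne_of_gt hq4)
      have huq : ucubic a c k m qx = 0 := by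
        rw [hiden qx hq1 hq2, hinner, mul_zero]
      have : qx = x₀ := huniq qx x₀ ⟨hq1, hq2⟩ hx₀mem huq hx₀
      simp [this]
end

section
/- Let a,b,c,k,m > 0. For all x > 0 and y > 0, the divergence of the Dulac-rescaled vector field of system (2) satisfies ∂/∂x [F(x,y)/(x·y)] + ∂/∂y [G(x,y)/(x·y)] = −b/y − (m·x + 1)/x, and this quantity is strictly negative. -/
/-- **Divergence of the Dulac-rescaled vector field of system (2).**
With the Dulac function B(x,y) = 1/(x·y), for all x > 0 and y > 0 we have
∂/∂x [F(x,y)/(x·y)] + ∂/∂y [G(x,y)/(x·y)] = −b/y − (m·x+1)/x < 0, where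
F(x,y) = b·x·(1−x−c·y) and G(x,y) = y·(1/(1+k·x) − y − a·x − m·x·y). -/
theorem dulac_divergence_neg
    (a b c k m : ℝ) (ha : 0 < a) (hb : 0 < b) (hc : 0 < c)
    (hk : 0 < k) (hm : 0 < m) (x y : ℝ) (hx : 0 < x) (hy : 0 < y) :
    deriv (fun s : ℝ => (b * s * (1 - s - c * y)) / (s * y)) x +
        deriv (fun s : ℝ =>
          (s * (1 / (1 + k * x) - s - a * x - m * x * s)) / (x * s)) y =
      -b / y - (m * x + 1) / x ∧
    -b / y - (m * x + 1) / x < 0 := by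
  have hy' : y ≠ 0 := hy.ne'
  have hx' : x ≠ 0 := hx.ne'
  have h1 : deriv (fun s : ℝ => (b * s * (1 - s - c * y)) / (s * y)) x
      = -(b / y) := by
    have he : (fun s : ℝ => (b * s * (1 - s - c * y)) / (s * y))
        =ᶠ[nhds x] (fun s : ℝ => (b / y - c * b) - (b / y) * s) := by
      filter_upwards [eventually_gt_nhds hx] with s hs
      have hs' : s ≠ 0 := hs.ne'
      field_simp
      ring
    rw [he.deriv_eq]
    have h : HasDerivAt (fun s : ℝ => (b / y - c * b) - (b / y) * s)
        (-(b / y)) x := by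
      simpa using ((hasDerivAt_id x).const_mul (b / y)).const_sub (b / y - c * b)
    exact h.deriv
  have h2 : deriv (fun s : ℝ =>
      (s * (1 / (1 + k * x) - s - a * x - m * x * s)) / (x * s)) y
      = -((1 + m * x) / x) := by
    have he : (fun s : ℝ =>
        (s * (1 / (1 + k * x) - s - a * x - m * x * s)) / (x * s))
        =ᶠ[nhds y] (fun s : ℝ =>
          ((1 / (1 + k * x) - a * x) / x) - ((1 + m * x) / x) * s) := by
      filter_upwards [eventually_gt_nhds hy] with s hs
      have hs' : s ≠ 0 := hs.ne'
      have hkx : (1 : ℝ) + k * x ≠ 0 := by positivity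
      field_simp
      ring
    rw [he.deriv_eq]
    have h : HasDerivAt (fun s : ℝ =>
        ((1 / (1 + k * x) - a * x) / x) - ((1 + m * x) / x) * s)
        (-((1 + m * x) / x)) y := by
      simpa using ((hasDerivAt_id y).const_mul ((1 + m * x) / x)).const_sub
        ((1 / (1 + k * x) - a * x) / x)
    exact h.deriv
  constructor
  · rw [h1, h2]; ring
  · have : 0 < (m * x + 1) / x := by positivity
    have hb' : 0 < b / y := by positivity
    have : -b / y - (m * x + 1) / x < 0 := by
      rw [neg_div]; linarith
    exact this
end

section
/- Consider system (2) with parameters a,b,c,k,m > 0. If x,y : ℝ → ℝ are differentiable, satisfy x'(t) = F(x(t),y(t)) and y'(t) = G(x(t),y(t)) for all t ∈ ℝ, satisfy x(t) > 0 and y(t) > 0 for all t ∈ ℝ, and are periodic with some period T > 0 (x(t+T)=x(t) and y(t+T)=y(t) for all t), then x and y are constant functions. In other words, system (2) has no nonconstant periodic orbit in the open positive quadrant. -/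
open Set Filter Topology

/-- If `f < 0` just to the left of `τ`, `f τ = 0`, and `f` has derivative `d` at `τ`,
then `d ≥ 0`. -/
lemma slopeLeftNonneg {f : ℝ → ℝ} {d t₀ τ : ℝ} (hf : HasDerivAt f d τ)
    (h0 : t₀ < τ) (hneg : ∀ s, t₀ ≤ s → s < τ → f s < 0) (hfτ : f τ = 0) : 0 ≤ d := by
  have h : Tendsto (slope f τ) (𝓝[<] τ) (𝓝 d) :=
    (hasDerivAt_iff_tendsto_slope.mp hf).mono_left
      (nhdsWithin_mono τ fun s hs => ne_of_lt hs)
  refine ge_of_tendsto h ?_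
  filter_upwards [Ioo_mem_nhdsLT_of_mem (⟨h0, le_refl τ⟩ : τ ∈ Set.Ioc t₀ τ)] with s hs
  have hfs : f s < 0 := hneg s hs.1.le hs.2
  have hpos : (0:ℝ) < (f s - f τ) / (s - τ) := by
    apply div_pos_iff.mpr
    exact Or.inr ⟨by rw [hfτ]; linarith, by linarith [hs.2]⟩
  rw [slope_def_field]
  linarith

/-- If `f τ = 0` and `f' τ < 0`, then `f < 0` just to the right of `τ`. -/
lemma pushRightNeg {f : ℝ → ℝ} {d τ : ℝ} (hf : HasDerivAt f d τ) (hfτ : f τ = 0)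
    (hd : d < 0) : ∀ᶠ s in 𝓝[>] τ, f s < 0 := by
  have h : Tendsto (slope f τ) (𝓝[>] τ) (𝓝 d) :=
    (hasDerivAt_iff_tendsto_slope.mp hf).mono_left
      (nhdsWithin_mono τ fun s hs => ne_of_gt hs)
  have h2 : ∀ᶠ s in 𝓝[>] τ, slope f τ s < 0 := h.eventually (Iio_mem_nhds hd)
  filter_upwards [h2, self_mem_nhdsWithin] with s hs1 hs2
  rw [slope_def_field, hfτ, sub_zero] at hs1
  have hsτ : (0:ℝ) < s - τ := sub_pos.mpr hs2
  by_contra hge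
  push_neg at hge
  exact absurd (div_nonneg hge hsτ.le) (not_le.mpr hs1)

lemma pushRightPos {f : ℝ → ℝ} {d τ : ℝ} (hf : HasDerivAt f d τ) (hfτ : f τ = 0)
    (hd : 0 < d) : ∀ᶠ s in 𝓝[>] τ, 0 < f s := by
  have h := pushRightNeg hf.neg (by simp [hfτ]) (by linarith : -d < 0)
  filter_upwards [h] with s hs
  simp only [Pi.neg_apply, neg_lt_zero] at hs
  linarith

/-- Forward invariance of the open quadrant `{u < 0 < w}` for a planar linear
(nonautonomous) system with negative off-diagonal coefficients, provided the
solution never vanishes. -/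
lemma quadInv (u w P Q R S : ℝ → ℝ)
    (hu : ∀ t, HasDerivAt u (P t * u t + Q t * w t) t)
    (hw : ∀ t, HasDerivAt w (R t * u t + S t * w t) t)
    (hQ : ∀ t, Q t < 0) (hR : ∀ t, R t < 0)
    (hnv : ∀ t, ¬(u t = 0 ∧ w t = 0))
    {t₀ : ℝ} (hu0 : u t₀ < 0) (hw0 : 0 < w t₀) :
    ∀ t, t₀ ≤ t → u t < 0 ∧ 0 < w t := by
  have hcu : Continuous u := continuous_iff_continuousAt.mpr fun t => (hu t).continuousAt
  have hcw : Continuous w := continuous_iff_continuousAt.mpr fun t => (hw t).continuousAt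
  set B : Set ℝ := {t | t₀ ≤ t ∧ (0 ≤ u t ∨ w t ≤ 0)} with hB
  suffices hBe : B = ∅ by
    intro t ht
    have htB : t ∉ B := by rw [hBe]; exact Set.notMem_empty t
    simp only [hB, Set.mem_setOf_eq] at htB
    push_neg at htB
    exact htB ht
  by_contra hne
  have hBne : B.Nonempty := Set.nonempty_iff_ne_empty.mpr hne
  have hclosed : IsClosed B := by
    have hEq : B = Set.Ici t₀ ∩ ({t | 0 ≤ u t} ∪ {t | w t ≤ 0}) := by
      ext t
      simp [hB, Set.mem_Ici, Set.mem_setOf_eq]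
    rw [hEq]
    exact isClosed_Ici.inter
      ((isClosed_le continuous_const hcu).union (isClosed_le hcw continuous_const))
  have hbdd : BddBelow B := ⟨t₀, fun t ht => ht.1⟩
  set τ := sInf B with hτdef
  have hτB : τ ∈ B := hclosed.csInf_mem hBne hbdd
  have ht₀τ : t₀ < τ := by
    refine lt_of_le_of_ne hτB.1 fun heq => ?_
    rcases hτB.2 with h | h
    · rw [← heq] at h; linarith
    · rw [← heq] at h; linarith
  have hbefore : ∀ s, t₀ ≤ s → s < τ → u s < 0 ∧ 0 < w s := by
    intro s hs1 hs2
    have hsB : s ∉ B := fun hsB => absurd hs2 (not_lt.mpr (csInf_le hbdd hsB))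
    simp only [hB, Set.mem_setOf_eq] at hsB
    push_neg at hsB
    exact hsB hs1
  have huτ : u τ ≤ 0 := by
    have htd : Tendsto u (𝓝[<] τ) (𝓝 (u τ)) := (hcu.tendsto τ).mono_left nhdsWithin_le_nhds
    refine le_of_tendsto htd ?_
    filter_upwards [Ioo_mem_nhdsLT_of_mem (⟨ht₀τ, le_refl τ⟩ : τ ∈ Set.Ioc t₀ τ)] with s hs
    exact (hbefore s hs.1.le hs.2).1.le
  have hwτ : 0 ≤ w τ := by
    have htd : Tendsto w (𝓝[<] τ) (𝓝 (w τ)) := (hcw.tendsto τ).mono_left nhdsWithin_le_nhds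
    refine ge_of_tendsto htd ?_
    filter_upwards [Ioo_mem_nhdsLT_of_mem (⟨ht₀τ, le_refl τ⟩ : τ ∈ Set.Ioc t₀ τ)] with s hs
    exact (hbefore s hs.1.le hs.2).2.le
  rcases hτB.2 with hcase | hcase
  · -- u τ = 0, w τ > 0 : derivative of u at τ is negative, contradicting left slope
    have huz : u τ = 0 := le_antisymm huτ hcase
    have hwpos : 0 < w τ := hwτ.lt_of_ne fun h => hnv τ ⟨huz, h.symm⟩
    have hd : P τ * u τ + Q τ * w τ < 0 := by
      rw [huz, mul_zero, zero_add]
      exact mul_neg_of_neg_of_pos (hQ τ) hwpos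
    have hge := slopeLeftNonneg (hu τ) ht₀τ (fun s h1 h2 => (hbefore s h1 h2).1) huz
    linarith
  · -- w τ = 0, u τ < 0 : derivative of w at τ is positive, contradicting left slope of -w
    have hwz : w τ = 0 := le_antisymm hcase hwτ
    have huneg : u τ < 0 := huτ.lt_of_ne fun h => hnv τ ⟨h, hwz⟩
    have hd : 0 < R τ * u τ + S τ * w τ := by
      rw [hwz, mul_zero, add_zero]
      exact mul_pos_of_neg_of_neg (hR τ) huneg
    have hge := slopeLeftNonneg ((hw τ).neg) ht₀τ
      (fun s h1 h2 => by simpa using (hbefore s h1 h2).2) (by simp [hwz])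
    linarith

/-- Grönwall: if a solution of a planar linear system with continuous coefficients
vanishes at `τ`, it vanishes for all `t ≥ τ`. -/
lemma gronwallZero (u w P Q R S : ℝ → ℝ)
    (hu : ∀ t, HasDerivAt u (P t * u t + Q t * w t) t)
    (hw : ∀ t, HasDerivAt w (R t * u t + S t * w t) t)
    (hPc : Continuous P) (hQc : Continuous Q) (hRc : Continuous R) (hSc : Continuous S)
    {τ : ℝ} (huτ : u τ = 0) (hwτ : w τ = 0) :
    ∀ t, τ ≤ t → u t = 0 ∧ w t = 0 := by
  intro b hb
  have hcu : Continuous u := continuous_iff_continuousAt.mpr fun t => (hu t).continuousAt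
  have hcw : Continuous w := continuous_iff_continuousAt.mpr fun t => (hw t).continuousAt
  set r : ℝ → ℝ := fun t => u t * u t + w t * w t with hrdef
  set r' : ℝ → ℝ := fun t =>
    2 * u t * (P t * u t + Q t * w t) + 2 * w t * (R t * u t + S t * w t) with hr'def
  have hr : ∀ t, HasDerivAt r (r' t) t := by
    intro t
    have h1 : HasDerivAt (fun t => u t * u t + w t * w t) _ t :=
      ((hu t).mul (hu t)).add ((hw t).mul (hw t))
    convert h1 using 1
    simp only [hr'def]
    ring
  set Φ : ℝ → ℝ := fun t => 2 * |P t| + |Q t| + |R t| + 2 * |S t| with hΦdef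
  have hΦc : Continuous Φ := by
    rw [hΦdef]
    exact (((continuous_const.mul hPc.abs).add hQc.abs).add hRc.abs).add
      (continuous_const.mul hSc.abs)
  obtain ⟨C, hC⟩ := (isCompact_Icc (a := τ) (b := b)).exists_bound_of_continuousOn
    hΦc.continuousOn
  have key : ∀ t ∈ Set.Icc τ b, ‖r t‖ ≤ gronwallBound 0 C 0 (t - τ) := by
    apply norm_le_gronwallBound_of_norm_deriv_right_le (f' := r')
    · exact ((hcu.mul hcu).add (hcw.mul hcw)).continuousOn
    · exact fun t _ => (hr t).hasDerivWithinAt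
    · simp [hrdef, huτ, hwτ]
    · intro t ht
      have hrnn : 0 ≤ r t := by
        simp only [hrdef]
        exact add_nonneg (mul_self_nonneg _) (mul_self_nonneg _)
      have h1 : |r' t| ≤ Φ t * r t := by
        simp only [hrdef, hr'def, hΦdef]
        rw [abs_le]
        constructor
        · nlinarith [mul_nonneg (sub_nonneg.mpr (le_abs_self (P t))) (mul_self_nonneg (u t)),
            mul_nonneg (abs_nonneg (P t)) (mul_self_nonneg (w t)),
            mul_nonneg (sub_nonneg.mpr (le_abs_self (S t))) (mul_self_nonneg (w t)),
            mul_nonneg (abs_nonneg (S t)) (mul_self_nonneg (u t)),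
            mul_nonneg (by linarith [neg_abs_le (P t)] : (0:ℝ) ≤ |P t| + P t)
              (mul_self_nonneg (u t)),
            mul_nonneg (by linarith [neg_abs_le (S t)] : (0:ℝ) ≤ |S t| + S t)
              (mul_self_nonneg (w t)),
            mul_nonneg (by linarith [neg_abs_le (Q t)] : (0:ℝ) ≤ |Q t| + Q t)
              (mul_self_nonneg (u t + w t)),
            mul_nonneg (sub_nonneg.mpr (le_abs_self (Q t))) (mul_self_nonneg (u t - w t)),
            mul_nonneg (by linarith [neg_abs_le (Q t)] : (0:ℝ) ≤ |Q t| + Q t)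
              (mul_self_nonneg (u t - w t)),
            mul_nonneg (sub_nonneg.mpr (le_abs_self (Q t))) (mul_self_nonneg (u t + w t)),
            mul_nonneg (by linarith [neg_abs_le (R t)] : (0:ℝ) ≤ |R t| + R t)
              (mul_self_nonneg (u t + w t)),
            mul_nonneg (sub_nonneg.mpr (le_abs_self (R t))) (mul_self_nonneg (u t - w t)),
            mul_nonneg (by linarith [neg_abs_le (R t)] : (0:ℝ) ≤ |R t| + R t)
              (mul_self_nonneg (u t - w t)),
            mul_nonneg (sub_nonneg.mpr (le_abs_self (R t))) (mul_self_nonneg (u t + w t))]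
        · nlinarith [mul_nonneg (sub_nonneg.mpr (le_abs_self (P t))) (mul_self_nonneg (u t)),
            mul_nonneg (abs_nonneg (P t)) (mul_self_nonneg (w t)),
            mul_nonneg (sub_nonneg.mpr (le_abs_self (S t))) (mul_self_nonneg (w t)),
            mul_nonneg (abs_nonneg (S t)) (mul_self_nonneg (u t)),
            mul_nonneg (by linarith [neg_abs_le (P t)] : (0:ℝ) ≤ |P t| + P t)
              (mul_self_nonneg (u t)),
            mul_nonneg (by linarith [neg_abs_le (S t)] : (0:ℝ) ≤ |S t| + S t)
              (mul_self_nonneg (w t)),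
            mul_nonneg (by linarith [neg_abs_le (Q t)] : (0:ℝ) ≤ |Q t| + Q t)
              (mul_self_nonneg (u t + w t)),
            mul_nonneg (sub_nonneg.mpr (le_abs_self (Q t))) (mul_self_nonneg (u t - w t)),
            mul_nonneg (by linarith [neg_abs_le (Q t)] : (0:ℝ) ≤ |Q t| + Q t)
              (mul_self_nonneg (u t - w t)),
            mul_nonneg (sub_nonneg.mpr (le_abs_self (Q t))) (mul_self_nonneg (u t + w t)),
            mul_nonneg (by linarith [neg_abs_le (R t)] : (0:ℝ) ≤ |R t| + R t)
              (mul_self_nonneg (u t + w t)),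
            mul_nonneg (sub_nonneg.mpr (le_abs_self (R t))) (mul_self_nonneg (u t - w t)),
            mul_nonneg (by linarith [neg_abs_le (R t)] : (0:ℝ) ≤ |R t| + R t)
              (mul_self_nonneg (u t - w t)),
            mul_nonneg (sub_nonneg.mpr (le_abs_self (R t))) (mul_self_nonneg (u t + w t))]
      have h2 : Φ t ≤ C := le_trans (le_abs_self _)
        (hC t (Set.mem_Icc.mpr ⟨ht.1, ht.2.le⟩))
      calc ‖r' t‖ = |r' t| := rfl
        _ ≤ Φ t * r t := h1
        _ ≤ C * r t := mul_le_mul_of_nonneg_right h2 hrnn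
        _ = C * ‖r t‖ + 0 := by rw [Real.norm_eq_abs, abs_of_nonneg hrnn]; ring
  have hrb := key b ⟨hb, le_refl b⟩
  have h0 : gronwallBound (0:ℝ) C 0 (b - τ) = 0 := by
    rw [gronwallBound_ε0]; simp
  rw [h0] at hrb
  have hr0 : r b = 0 := by
    have := norm_le_zero_iff.mp hrb
    exact this
  simp only [hrdef] at hr0
  constructor
  · nlinarith [mul_self_nonneg (u b), mul_self_nonneg (w b)]
  · nlinarith [mul_self_nonneg (u b), mul_self_nonneg (w b)]

/-- **No nonconstant periodic orbit in the open positive quadrant.**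
Any positive periodic solution of system (2), i.e. of
x' = b·x·(1 − x − c·y), y' = y·(1/(1+k·x) − y − a·x − m·x·y) with
a,b,c,k,m > 0, must be constant. -/
theorem no_periodic_orbit
    (a b c k m : ℝ) (ha : 0 < a) (hb : 0 < b) (hc : 0 < c)
    (hk : 0 < k) (hm : 0 < m) (x y : ℝ → ℝ)
    (hx : Differentiable ℝ x) (hy : Differentiable ℝ y)
    (hxeq : ∀ t : ℝ, deriv x t = b * x t * (1 - x t - c * y t))
    (hyeq : ∀ t : ℝ, deriv y t =
      y t * (1 / (1 + k * x t) - y t - a * x t - m * x t * y t))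
    (hxpos : ∀ t : ℝ, 0 < x t) (hypos : ∀ t : ℝ, 0 < y t)
    (T : ℝ) (hT : 0 < T)
    (hper : ∀ t : ℝ, x (t + T) = x t ∧ y (t + T) = y t) :
    (∀ t : ℝ, x t = x 0) ∧ (∀ t : ℝ, y t = y 0) := by
  have hu : ∀ t, HasDerivAt x (deriv x t) t := fun t => (hx t).hasDerivAt
  have hw : ∀ t, HasDerivAt y (deriv y t) t := fun t => (hy t).hasDerivAt
  have hden : ∀ t, (0:ℝ) < 1 + k * x t := fun t => by nlinarith [hxpos t]
  set u := deriv x with hudef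
  set w := deriv y with hwdef
  set Pf : ℝ → ℝ := fun t => b * (1 - x t - c * y t) - b * x t with hPdef
  set Qf : ℝ → ℝ := fun t => -(b * c * x t) with hQdef
  set Rf : ℝ → ℝ := fun t => y t * (-(k / (1 + k * x t)^2) - a - m * y t) with hRdef
  set Sf : ℝ → ℝ := fun t =>
    (1/(1 + k * x t) - y t - a * x t - m * x t * y t) + y t * (-1 - m * x t) with hSdef
  have hU : ∀ t, HasDerivAt u (Pf t * u t + Qf t * w t) t := by
    intro t
    have h1 : HasDerivAt (fun s => b * x s * (1 - x s - c * y s))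
        ((b * u t) * (1 - x t - c * y t) + (b * x t) * (0 - u t - c * w t)) t :=
      ((hu t).const_mul b).mul
        (((hasDerivAt_const t (1:ℝ)).sub (hu t)).sub ((hw t).const_mul c))
    have h2 : u = (fun s => b * x s * (1 - x s - c * y s)) := funext fun s => hxeq s
    rw [← h2] at h1
    convert h1 using 1
    simp only [hPdef, hQdef]
    ring
  have hW : ∀ t, HasDerivAt w (Rf t * u t + Sf t * w t) t := by
    intro t
    have hD : HasDerivAt (fun s => 1 + k * x s) (k * u t) t := by
      have h : HasDerivAt (fun s => 1 + k * x s) _ t :=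
        (hasDerivAt_const t (1:ℝ)).add ((hu t).const_mul k)
      simpa using h
    have hInv : HasDerivAt (fun s => (1 + k * x s)⁻¹)
        (-(k * u t) / (1 + k * x t)^2) t := hD.inv (hden t).ne'
    have hG : HasDerivAt (fun s => (1 + k * x s)⁻¹ - y s - a * x s - m * x s * y s)
        (-(k * u t) / (1 + k * x t)^2 - w t - a * u t
          - ((m * u t) * y t + (m * x t) * w t)) t :=
      ((hInv.sub (hw t)).sub ((hu t).const_mul a)).sub
        (((hu t).const_mul m).mul (hw t))
    have h1 : HasDerivAt (fun s => y s * ((1 + k * x s)⁻¹ - y s - a * x s - m * x s * y s)) _ t :=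
      (hw t).mul hG
    have h2 : w = (fun s => y s * ((1 + k * x s)⁻¹ - y s - a * x s - m * x s * y s)) :=
      funext fun s => (hyeq s).trans (by rw [one_div])
    rw [← h2] at h1
    convert h1 using 1
    simp only [hRdef, hSdef]
    have hne := (hden t).ne'
    field_simp
    ring
  have hcu : Continuous u := continuous_iff_continuousAt.mpr fun t => (hU t).continuousAt
  have hcw : Continuous w := continuous_iff_continuousAt.mpr fun t => (hW t).continuousAt
  have hcx : Continuous x := hx.continuous
  have hcy : Continuous y := hy.continuous
  have hPc : Continuous Pf := by
    rw [hPdef]; fun_prop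
  have hQc : Continuous Qf := by
    rw [hQdef]; fun_prop
  have hden2 : ∀ t, ((1 + k * x t)^2 : ℝ) ≠ 0 := fun t => pow_ne_zero 2 (hden t).ne'
  have hRc : Continuous Rf := by
    rw [hRdef]
    exact hcy.mul
      ((((continuous_const.div (by fun_prop) hden2).neg).sub continuous_const).sub
        (continuous_const.mul hcy))
  have hSc : Continuous Sf := by
    rw [hSdef]
    exact ((((continuous_const.div (by fun_prop) fun t => (hden t).ne').sub hcy).sub
      (continuous_const.mul hcx)).sub ((continuous_const.mul hcx).mul hcy)).add
      (hcy.mul (continuous_const.sub (continuous_const.mul hcx)))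
  have hup : ∀ t, u (t + T) = u t := fun t => by
    rw [hxeq, hxeq, (hper t).1, (hper t).2]
  have hwp : ∀ t, w (t + T) = w t := fun t => by
    rw [hyeq, hyeq, (hper t).1, (hper t).2]
  have hupn : ∀ (n : ℕ) (t : ℝ), u (t + n * T) = u t := by
    intro n
    induction n with
    | zero => intro t; simp
    | succ n ih =>
      intro t
      have h : t + ((n:ℕ)+1 : ℕ) * T = (t + (n:ℕ) * T) + T := by push_cast; ring
      rw [h, hup, ih]
  have hwpn : ∀ (n : ℕ) (t : ℝ), w (t + n * T) = w t := by
    intro n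
    induction n with
    | zero => intro t; simp
    | succ n ih =>
      intro t
      have h : t + ((n:ℕ)+1 : ℕ) * T = (t + (n:ℕ) * T) + T := by push_cast; ring
      rw [h, hwp, ih]
  by_cases hcase : ∃ τ, u τ = 0 ∧ w τ = 0
  · obtain ⟨τ, h1, h2⟩ := hcase
    have hz := gronwallZero u w Pf Qf Rf Sf hU hW hPc hQc hRc hSc h1 h2
    have hzall : ∀ t, u t = 0 ∧ w t = 0 := by
      intro t
      obtain ⟨n, hn⟩ := exists_nat_ge ((τ - t) / T)
      have hτle : τ ≤ t + n * T := by
        rw [div_le_iff₀ hT] at hn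
        linarith
      have h3 := hz _ hτle
      rwa [hupn, hwpn] at h3
    constructor
    · exact fun t => is_const_of_deriv_eq_zero hx
        (fun s => by rw [← hudef]; exact (hzall s).1) t 0
    · exact fun t => is_const_of_deriv_eq_zero hy
        (fun s => by rw [← hwdef]; exact (hzall s).2) t 0
  · push_neg at hcase
    have hnv : ∀ t, ¬(u t = 0 ∧ w t = 0) := fun t h => hcase t h.1 h.2
    have hxT : x 0 = x T := by
      have h := (hper 0).1
      rw [zero_add] at h
      exact h.symm
    obtain ⟨τ, hτmem, hτz⟩ := exists_deriv_eq_zero hT hcx.continuousOn hxT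
    have huτ : u τ = 0 := by rw [hudef]; exact hτz
    have hQneg : ∀ t, Qf t < 0 := by
      intro t
      simp only [hQdef]
      have h : 0 < b * c * x t := mul_pos (mul_pos hb hc) (hxpos t)
      linarith
    have hRneg : ∀ t, Rf t < 0 := by
      intro t
      simp only [hRdef]
      have h1 : 0 < y t := hypos t
      have h2a : 0 ≤ k / (1 + k * x t)^2 := div_nonneg hk.le (sq_nonneg _)
      have h2b : 0 < m * y t := mul_pos hm (hypos t)
      have h2 : 0 < k / (1 + k * x t)^2 + a + m * y t := by linarith
      nlinarith [mul_pos h1 h2]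
    rcases lt_or_gt_of_ne (hcase τ huτ) with hwneg | hwpos
    · -- w τ < 0 : enter quadrant u > 0, w < 0; x strictly increasing forever
      have hd : 0 < Pf τ * u τ + Qf τ * w τ := by
        rw [huτ, mul_zero, zero_add]
        exact mul_pos_of_neg_of_neg (hQneg τ) hwneg
      have hev1 : ∀ᶠ s in 𝓝[>] τ, 0 < u s := pushRightPos (hU τ) huτ hd
      have hev2 : ∀ᶠ s in 𝓝[>] τ, w s < 0 :=
        ((hcw.continuousAt (x := τ)).eventually (Iio_mem_nhds hwneg)).filter_mono
          nhdsWithin_le_nhds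
      obtain ⟨s, hs1, hs2⟩ := (hev1.and hev2).exists
      have hinv := quadInv (fun t => -u t) (fun t => -w t) Pf Qf Rf Sf
        (fun t => by
          have h : HasDerivAt (fun t => -u t) _ t := (hU t).neg
          convert h using 1
          ring)
        (fun t => by
          have h : HasDerivAt (fun t => -w t) _ t := (hW t).neg
          convert h using 1
          ring)
        hQneg hRneg
        (fun t h => hnv t ⟨neg_eq_zero.mp h.1, neg_eq_zero.mp h.2⟩)
        (show -u s < 0 by linarith) (show (0:ℝ) < -w s by linarith)
      have hmono : StrictMonoOn x (Set.Ici s) := by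
        apply strictMonoOn_of_deriv_pos (convex_Ici s) hcx.continuousOn
        intro t ht
        rw [interior_Ici] at ht
        have h : 0 < u t := by simpa using (hinv t (le_of_lt ht)).1
        rw [← hudef]
        exact h
      have h1 := hmono (Set.self_mem_Ici) (Set.mem_Ici.mpr (by linarith : s ≤ s + T))
        (by linarith : s < s + T)
      rw [(hper s).1] at h1
      exact ((lt_irrefl _) h1).elim
    · -- w τ > 0 : enter quadrant u < 0, w > 0; x strictly decreasing forever
      have hd : Pf τ * u τ + Qf τ * w τ < 0 := by
        rw [huτ, mul_zero, zero_add]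
        exact mul_neg_of_neg_of_pos (hQneg τ) hwpos
      have hev1 : ∀ᶠ s in 𝓝[>] τ, u s < 0 := pushRightNeg (hU τ) huτ hd
      have hev2 : ∀ᶠ s in 𝓝[>] τ, 0 < w s :=
        ((hcw.continuousAt (x := τ)).eventually (Ioi_mem_nhds hwpos)).filter_mono
          nhdsWithin_le_nhds
      obtain ⟨s, hs1, hs2⟩ := (hev1.and hev2).exists
      have hinv := quadInv u w Pf Qf Rf Sf hU hW hQneg hRneg hnv hs1 hs2
      have hanti : StrictAntiOn x (Set.Ici s) := by
        apply strictAntiOn_of_deriv_neg (convex_Ici s) hcx.continuousOn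
        intro t ht
        rw [interior_Ici] at ht
        have h := (hinv t (le_of_lt ht)).1
        rw [← hudef]
        linarith
      have h1 := hanti (Set.self_mem_Ici) (Set.mem_Ici.mpr (by linarith : s ≤ s + T))
        (by linarith : s < s + T)
      rw [(hper s).1] at h1
      exact ((lt_irrefl _) h1).elim
end

section
/- Let a,b,c,k,m > 0 with 0 < a < 1, 0 < c < 1 and 0 < k < 1/a − 1. Then there exists a unique positive equilibrium (x*, y*) of system (2) (with x*, y* > 0, F(x*,y*) = 0, G(x*,y*) = 0), and it is globally asymptotically stable in the open positive quadrant: every pair of differentiable functions x,y : ℝ → ℝ satisfying x'(t) = F(x(t),y(t)), y'(t) = G(x(t),y(t)) for t ≥ 0 with x(0) > 0, y(0) > 0 satisfies (x(t), y(t)) → (x*, y*) as t → ∞. -/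
open Set Filter Real MeasureTheory intervalIntegral

set_option maxHeartbeats 1000000



noncomputable def Hfun (a c k m : ℝ) : ℝ → ℝ :=
  fun x => (1 + k*x)⁻¹ + (x - 1)/c - a*x + m*x*(x-1)/c

noncomputable def Hfun' (a c k m : ℝ) : ℝ → ℝ :=
  fun x => -(k * ((1+k*x)^2)⁻¹) + 1/c - a + m*(2*x-1)/c

lemma Hfun_hasDerivAt {a c k m x : ℝ} (hx : (0:ℝ) < 1 + k*x) :
    HasDerivAt (Hfun a c k m) (Hfun' a c k m x) x := by
  have h1 : HasDerivAt (fun x : ℝ => 1 + k*x) k x := by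
    simpa using ((hasDerivAt_id x).const_mul k).const_add 1
  have h2 : HasDerivAt (fun x : ℝ => (1 + k*x)⁻¹) (-k / (1+k*x)^2) x := by
    simpa using h1.fun_inv hx.ne'
  have h3 : HasDerivAt (fun x : ℝ => (x - 1)/c) (1/c) x := by
    simpa using ((hasDerivAt_id x).sub_const 1).div_const c
  have h4 : HasDerivAt (fun x : ℝ => a*x) a x := by
    simpa using (hasDerivAt_id x).const_mul a
  have h5 : HasDerivAt (fun x : ℝ => m*x*(x-1)/c) ((m*(x-1) + m*x)/c) x := by
    have : HasDerivAt (fun x : ℝ => m*x*(x-1)) (m*(x-1) + m*x) x := by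
      simpa [mul_comm, mul_assoc] using
        (((hasDerivAt_id x).const_mul m).fun_mul ((hasDerivAt_id x).sub_const 1))
    simpa using this.div_const c
  have := ((h2.fun_add h3).fun_sub h4).fun_add h5
  refine this.congr_deriv ?_
  unfold Hfun'
  field_simp
  ring

lemma Hfun'_hasDerivAt {a c k m x : ℝ} (hx : (0:ℝ) < 1 + k*x) :
    HasDerivAt (Hfun' a c k m) (2*k^2 * ((1+k*x)^3)⁻¹ + 2*m/c) x := by
  have h1 : HasDerivAt (fun x : ℝ => 1 + k*x) k x := by
    simpa using ((hasDerivAt_id x).const_mul k).const_add 1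
  have hsq : HasDerivAt (fun x : ℝ => (1 + k*x)^2) (2*(1+k*x)*k) x := by
    have := h1.fun_pow 2
    simpa [mul_comm, mul_assoc] using this
  have hne : ((1:ℝ)+k*x)^2 ≠ 0 := pow_ne_zero _ hx.ne'
  have hinv : HasDerivAt (fun x : ℝ => ((1 + k*x)^2)⁻¹)
      (-(2*(1+k*x)*k) / ((1+k*x)^2)^2) x := hsq.inv hne
  have hlin : HasDerivAt (fun x : ℝ => m*(2*x-1)/c) (2*m/c) x := by
    have : HasDerivAt (fun x : ℝ => m*(2*x-1)) (m*2) x := by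
      simpa using (((hasDerivAt_id x).const_mul (2:ℝ)).sub_const 1).const_mul m
    simpa [mul_comm] using this.div_const c
  have := (((hinv.const_mul k).neg.add_const (1/c - a)).add hlin)
  have h2 : HasDerivAt (fun y : ℝ => -(k * ((1+k*y)^2)⁻¹) + (1/c - a) + m*(2*y-1)/c)
      (-(k * (-(2*(1+k*x)*k) / ((1+k*x)^2)^2)) + 2*m/c) x := this
  have heq : (fun y : ℝ => -(k * ((1+k*y)^2)⁻¹) + (1/c - a) + m*(2*y-1)/c) = Hfun' a c k m := by
    funext y; unfold Hfun'; ring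
  rw [heq] at h2
  convert h2 using 1
  field_simp

lemma Hfun_exists_root {a c k m : ℝ} (ha : 0 < a) (hb : True) (hc : 0 < c) (hc1 : c < 1)
    (hk : 0 < k) (hk1 : k < 1/a - 1) (hm : 0 < m) :
    ∃ xs ∈ Ioo (0:ℝ) 1, Hfun a c k m xs = 0 ∧
      ∀ z ∈ Ioo (0:ℝ) 1, Hfun a c k m z = 0 → z = xs := by
  have hpos : ∀ x ∈ Icc (0:ℝ) 1, (0:ℝ) < 1 + k*x := by
    intro x hx
    nlinarith [hx.1, hk]
  -- continuity on Icc 0 1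
  have hcont : ContinuousOn (Hfun a c k m) (Icc 0 1) := by
    intro x hx
    exact (Hfun_hasDerivAt (a := a) (c := c) (m := m) (hpos x hx)).continuousAt.continuousWithinAt
  -- endpoint values
  have hH0 : Hfun a c k m 0 < 0 := by
    have h1 : Hfun a c k m 0 = 1 - 1/c := by unfold Hfun; field_simp; ring
    have h2 : (1:ℝ) < 1/c := (one_lt_div hc).2 hc1
    rw [h1]; linarith
  have hH1 : 0 < Hfun a c k m 1 := by
    have h1k : (0:ℝ) < 1 + k := by linarith
    have h1 : Hfun a c k m 1 = (1+k)⁻¹ - a := by unfold Hfun; norm_num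
    have hk2 : a * (1 + k) < 1 := by
      have h3 : k + 1 < 1/a := by linarith
      have h4 : a * (1/a) = 1 := by field_simp
      nlinarith
    rw [h1]
    nlinarith [mul_inv_cancel₀ (ne_of_gt h1k)]
  -- IVT
  have hivt : (0:ℝ) ∈ Hfun a c k m '' Ioo 0 1 := by
    apply intermediate_value_Ioo (by norm_num : (0:ℝ) ≤ 1) hcont
    exact ⟨hH0, hH1⟩
  obtain ⟨xs, hxs, hxs0⟩ := hivt
  refine ⟨xs, hxs, hxs0, ?_⟩
  -- strict convexity
  have hconv : StrictConvexOn ℝ (Icc (0:ℝ) 1) (Hfun a c k m) := by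
    apply strictConvexOn_of_deriv2_pos (convex_Icc 0 1) hcont
    intro x hx
    rw [interior_Icc] at hx
    have hx1 : (0:ℝ) < 1 + k*x := hpos x (Ioo_subset_Icc_self hx)
    have hU : ∀ z ∈ {z : ℝ | 0 < 1 + k*z}, deriv (Hfun a c k m) z = Hfun' a c k m z := by
      intro z hz
      exact (Hfun_hasDerivAt hz).deriv
    have hUopen : IsOpen {z : ℝ | 0 < 1 + k*z} := by
      have : Continuous (fun z : ℝ => 1 + k*z) := by continuity
      exact isOpen_lt continuous_const this
    have hev : deriv (Hfun a c k m) =ᶠ[nhds x] Hfun' a c k m :=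
      Filter.eventuallyEq_of_mem (hUopen.mem_nhds hx1) hU
    have : deriv (deriv (Hfun a c k m)) x = deriv (Hfun' a c k m) x := hev.deriv_eq
    have h2 : deriv (Hfun' a c k m) x = 2*k^2 * ((1+k*x)^3)⁻¹ + 2*m/c :=
      (Hfun'_hasDerivAt hx1).deriv
    show 0 < deriv^[2] (Hfun a c k m) x
    have hit : deriv^[2] (Hfun a c k m) x = deriv (deriv (Hfun a c k m)) x := by
      rw [Function.iterate_succ, Function.iterate_one, Function.comp_apply]
    rw [hit, this, h2]
    have : (0:ℝ) < (1+k*x)^3 := by positivity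
    positivity
  -- uniqueness from convexity
  intro z hz hz0
  by_contra hne
  -- wlog via cases
  have key : ∀ u v : ℝ, u ∈ Ioo (0:ℝ) 1 → v ∈ Ioo (0:ℝ) 1 → u < v →
      Hfun a c k m u = 0 → Hfun a c k m v = 0 → False := by
    intro u v hu hv huv hu0 hv0
    have hθ : u = (1 - u/v) • (0:ℝ) + (u/v) • v := by
      have : v ≠ 0 := ne_of_gt (lt_trans hu.1 huv)
      simp only [smul_eq_mul, mul_zero, zero_add]
      field_simp
    have h1 : Hfun a c k m ((1 - u/v) • (0:ℝ) + (u/v) • v)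
        < (1 - u/v) * Hfun a c k m 0 + (u/v) * Hfun a c k m v := by
      have hv0' : (0:ℝ) < v := lt_trans hu.1 huv
      have h2 : u/v < 1 := (div_lt_one hv0').2 huv
      have h3 : 0 < u/v := div_pos hu.1 hv0'
      exact hconv.2 (left_mem_Icc.2 (by norm_num)) (Ioo_subset_Icc_self hv)
        (ne_of_lt hv.1) (by linarith) h3 (by ring)
    rw [← hθ, hu0, hv0] at h1
    simp at h1
    nlinarith [h1, hH0, div_pos hu.1 (lt_trans hu.1 huv), (div_lt_one (lt_trans hu.1 huv)).2 huv]
  rcases lt_or_gt_of_ne hne with h | h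
  · exact (key z xs hz hxs h hz0 hxs0).elim
  · exact (key xs z hxs hz h hxs0 hz0).elim



lemma ftc_right {g : ℝ → ℝ} (hg : ContinuousOn g (Ici 0)) {t : ℝ} (ht : 0 ≤ t) :
    HasDerivWithinAt (fun u => ∫ s in (0:ℝ)..u, g s) (g t) (Ici t) t := by
  have hint : IntervalIntegrable g MeasureTheory.volume 0 t := by
    apply ContinuousOn.intervalIntegrable
    apply hg.mono
    rw [uIcc_of_le ht]
    exact Icc_subset_Ici_self
  have hmeas : StronglyMeasurableAtFilter g (nhdsWithin t (Ioi t)) MeasureTheory.volume := by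
    refine ⟨Ici 0, ?_, hg.aestronglyMeasurable measurableSet_Ici⟩
    exact mem_of_superset self_mem_nhdsWithin (Ioi_subset_Ici_self.trans (Ici_subset_Ici.2 ht))
  have hcont : ContinuousWithinAt g (Ioi t) t := by
    have := hg t ht
    exact this.mono (Ioi_subset_Ici_self.trans (Ici_subset_Ici.2 ht))
  exact intervalIntegral.integral_hasDerivWithinAt_right hint hmeas hcont

/-- If `f' = f * g` on `[0,∞)` with `g` continuous there and `f 0 > 0`, then `f > 0` on `[0,∞)`. -/
lemma pos_of_deriv_eq_mul {f g : ℝ → ℝ} (hf : Differentiable ℝ f)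
    (hg : ContinuousOn g (Ici 0))
    (hfg : ∀ t ≥ (0:ℝ), deriv f t = f t * g t) (h0 : 0 < f 0) :
    ∀ t ≥ (0:ℝ), 0 < f t := by
  intro T hT
  set G : ℝ → ℝ := fun u => ∫ s in (0:ℝ)..u, g s with hGdef
  set φ : ℝ → ℝ := fun u => f u * Real.exp (-G u) with hφdef
  have hGd : ∀ t ≥ (0:ℝ), HasDerivWithinAt G (g t) (Ici t) t := fun t ht => ftc_right hg ht
  have hφd : ∀ t ∈ Ico (0:ℝ) T, HasDerivWithinAt φ 0 (Ici t) t := by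
    intro t ht
    have h1 : HasDerivWithinAt f (f t * g t) (Ici t) t := by
      have := (hf t).hasDerivAt
      rw [hfg t ht.1] at this
      exact this.hasDerivWithinAt
    have h2 : HasDerivWithinAt (fun u => Real.exp (-G u)) (Real.exp (-G t) * (-(g t))) (Ici t) t :=
      ((hGd t ht.1).neg).exp
    have := h1.fun_mul h2
    refine this.congr_deriv ?_
    ring
  have hGcont : ContinuousOn G (Icc 0 T) := by
    intro t ht
    rcases eq_or_lt_of_le ht.1 with h | h
    · exact ((hGd t ht.1).continuousWithinAt).mono (by rw [← h]; exact fun z hz => hz.1)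
    · have hint : IntervalIntegrable g MeasureTheory.volume 0 t := by
        apply ContinuousOn.intervalIntegrable
        apply hg.mono
        rw [uIcc_of_le ht.1]
        exact Icc_subset_Ici_self
      have hIci : Ici (0:ℝ) ∈ nhds t := mem_of_superset (Ioi_mem_nhds h) Ioi_subset_Ici_self
      have : HasDerivAt G (g t) t :=
        intervalIntegral.integral_hasDerivAt_right hint
          ⟨Ici 0, hIci, hg.aestronglyMeasurable measurableSet_Ici⟩ (hg.continuousAt hIci)
      exact this.continuousAt.continuousWithinAt
  have hφcont : ContinuousOn φ (Icc 0 T) :=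
    (hf.continuous.continuousOn).mul ((hGcont.neg).rexp)
  have := eq_of_has_deriv_right_eq (f' := fun _ => (0:ℝ)) (g := fun _ => φ 0)
    (fun t ht => hφd t ht) (fun t _ => (hasDerivWithinAt_const _ _ _))
    hφcont continuousOn_const rfl T (by exact ⟨hT, le_refl T⟩)
  have hφT : f T * Real.exp (-G T) = f 0 * Real.exp (-G 0) := by
    simpa [φ] using this
  have hexp : (0:ℝ) < Real.exp (-G T) := Real.exp_pos _
  nlinarith [Real.exp_pos (-G 0), mul_pos h0 (Real.exp_pos (-G 0))]


lemma le_bound_of_deriv_neg {f : ℝ → ℝ} (hf : Differentiable ℝ f) {M : ℝ}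
    (h0 : f 0 ≤ M) (hder : ∀ t ≥ (0:ℝ), M < f t → deriv f t < 0) :
    ∀ t ≥ (0:ℝ), f t ≤ M := by
  by_contra hcon
  push_neg at hcon
  obtain ⟨t1, ht1, hft1⟩ := hcon
  set S := {t ∈ Icc (0:ℝ) t1 | f t ≤ M} with hS
  have hScomp : IsCompact S := by
    apply IsCompact.of_isClosed_subset isCompact_Icc
    · exact isClosed_Icc.inter (isClosed_le hf.continuous continuous_const)
    · exact fun z hz => hz.1
  have hSne : S.Nonempty := ⟨0, ⟨le_refl 0, ht1⟩, h0⟩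
  set t0 := sSup S with ht0def
  have ht0S : t0 ∈ S := hScomp.sSup_mem hSne
  have ht0le : t0 ≤ t1 := ht0S.1.2
  have ht00 : 0 ≤ t0 := ht0S.1.1
  have ht0lt : t0 < t1 := by
    rcases eq_or_lt_of_le ht0le with h | h
    · exfalso; rw [h] at ht0S; exact absurd ht0S.2 (not_le.2 hft1)
    · exact h
  have hgt : ∀ s ∈ Ioc t0 t1, M < f s := by
    intro s hs
    by_contra hle
    push_neg at hle
    have : s ∈ S := ⟨⟨le_trans ht00 hs.1.le, hs.2⟩, hle⟩
    exact absurd (le_csSup hScomp.bddAbove this) (not_le.2 hs.1)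
  have hanti : StrictAntiOn f (Icc t0 t1) := by
    apply strictAntiOn_of_deriv_neg (convex_Icc t0 t1) hf.continuous.continuousOn
    intro s hs
    rw [interior_Icc] at hs
    exact hder s (le_trans ht00 hs.1.le) (hgt s ⟨hs.1, hs.2.le⟩)
  have := hanti (left_mem_Icc.2 ht0le) (right_mem_Icc.2 ht0le) ht0lt
  have : f t1 < M := lt_of_lt_of_le this ht0S.2
  linarith


lemma ftc_cont {A : ℝ → ℝ} (hA : Continuous A) (t0 t : ℝ) :
    HasDerivAt (fun x => ∫ s in t0..x, A s) (A t) t :=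
  intervalIntegral.integral_hasDerivAt_right (hA.intervalIntegrable _ _)
    (hA.stronglyMeasurableAtFilter _ _) hA.continuousAt

/-- Invariance of the cone `{u < 0, v > 0}` for a planar competitive variational system. -/
lemma cone_invariant {u v A B C D : ℝ → ℝ}
    (hA : Continuous A) (hD : Continuous D)
    (hu : ∀ t > (0:ℝ), HasDerivAt u (A t * u t + B t * v t) t)
    (hv : ∀ t > (0:ℝ), HasDerivAt v (C t * u t + D t * v t) t)
    (hB : ∀ t > (0:ℝ), B t < 0) (hC : ∀ t > (0:ℝ), C t < 0)
    {t0 : ℝ} (ht0 : 0 < t0) (hu0 : u t0 < 0) (hv0 : 0 < v t0) :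
    ∀ t ≥ t0, u t < 0 ∧ 0 < v t := by
  by_contra hcon
  push_neg at hcon
  obtain ⟨t1, ht1, hbad1⟩ := hcon
  have hucont : ContinuousOn u (Ioi 0) :=
    fun t ht => ((hu t ht).differentiableAt.continuousAt).continuousWithinAt
  have hvcont : ContinuousOn v (Ioi 0) :=
    fun t ht => ((hv t ht).differentiableAt.continuousAt).continuousWithinAt
  have hsub : Icc t0 t1 ⊆ Ioi 0 := fun z hz => lt_of_lt_of_le ht0 hz.1
  have hucc : ContinuousOn u (Icc t0 t1) := hucont.mono hsub
  have hvcc : ContinuousOn v (Icc t0 t1) := hvcont.mono hsub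
  set Bad := {t ∈ Icc t0 t1 | 0 ≤ u t ∨ v t ≤ 0} with hBadDef
  have hBadclosed : IsClosed Bad := by
    have h1 : Bad = (Icc t0 t1 ∩ u ⁻¹' Ici 0) ∪ (Icc t0 t1 ∩ v ⁻¹' Iic 0) := by
      ext z; simp [hBadDef, mem_inter_iff, and_or_left]
    rw [h1]
    exact (hucc.preimage_isClosed_of_isClosed isClosed_Icc isClosed_Ici).union
      (hvcc.preimage_isClosed_of_isClosed isClosed_Icc isClosed_Iic)
  have hBadcomp : IsCompact Bad :=
    IsCompact.of_isClosed_subset isCompact_Icc hBadclosed (fun z hz => hz.1)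
  have hBadne : Bad.Nonempty := by
    refine ⟨t1, ⟨⟨ht1, le_refl t1⟩, ?_⟩⟩
    rcases lt_or_ge (u t1) 0 with h | h
    · exact Or.inr (hbad1 h)
    · exact Or.inl h
  set T := sInf Bad with hTdef
  have hTBad : T ∈ Bad := hBadcomp.sInf_mem hBadne
  have hTt0 : t0 ≤ T := hTBad.1.1
  have hTt0' : t0 < T := by
    rcases eq_or_lt_of_le hTt0 with h | h
    · exfalso; rw [← h] at hTBad
      rcases hTBad.2 with h2 | h2
      · linarith
      · linarith
    · exact h
  have hTpos : 0 < T := lt_trans ht0 hTt0'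
  have hgood : ∀ s ∈ Ico t0 T, u s < 0 ∧ 0 < v s := by
    intro s hs
    by_contra hb
    have hsBad : s ∈ Bad := by
      refine ⟨⟨hs.1, le_trans hs.2.le hTBad.1.2⟩, ?_⟩
      rcases lt_or_ge (u s) 0 with h | h
      · rcases lt_or_ge 0 (v s) with h' | h'
        · exact absurd ⟨h, h'⟩ hb
        · exact Or.inr h'
      · exact Or.inl h
    exact absurd (csInf_le hBadcomp.bddBelow hsBad) (not_le.2 hs.2)
  -- the exponential-integrating-factor argument
  have hTsub : Icc t0 T ⊆ Ioi 0 := fun z hz => lt_of_lt_of_le ht0 hz.1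
  have hIA : Continuous (fun t : ℝ => ∫ s in t0..t, A s) := by
    have h : Differentiable ℝ (fun t : ℝ => ∫ s in t0..t, A s) :=
      fun t => (ftc_cont hA t0 t).differentiableAt
    exact h.continuous
  have hID : Continuous (fun t : ℝ => ∫ s in t0..t, D s) := by
    have h : Differentiable ℝ (fun t : ℝ => ∫ s in t0..t, D s) :=
      fun t => (ftc_cont hD t0 t).differentiableAt
    exact h.continuous
  -- u T < 0
  have huT : u T < 0 := by
    set z := fun t => u t * Real.exp (-(∫ s in t0..t, A s)) with hzdef
    have hzd : ∀ s ∈ Ioo t0 T, deriv z s = (B s * v s) * Real.exp (-(∫ r in t0..s, A r)) := by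
      intro s hs
      have hspos : (0:ℝ) < s := lt_trans ht0 hs.1
      have h1 : HasDerivAt z ((A s * u s + B s * v s) * Real.exp (-(∫ r in t0..s, A r))
          + u s * (Real.exp (-(∫ r in t0..s, A r)) * (-(A s)))) s :=
        (hu s hspos).mul (((ftc_cont hA t0 s).neg).exp)
      have := h1.deriv
      rw [this]; ring
    have hanti : StrictAntiOn z (Icc t0 T) := by
      apply strictAntiOn_of_deriv_neg (convex_Icc t0 T)
      · exact ((hucont.mono hTsub).mul ((hIA.neg.rexp).continuousOn))
      · intro s hs
        rw [interior_Icc] at hs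
        rw [hzd s hs]
        have hg := hgood s ⟨hs.1.le, hs.2⟩
        have := hB s (lt_trans ht0 hs.1)
        have : B s * v s < 0 := mul_neg_of_neg_of_pos this hg.2
        nlinarith [Real.exp_pos (-(∫ r in t0..s, A r))]
    have h2 := hanti (left_mem_Icc.2 hTt0'.le) (right_mem_Icc.2 hTt0'.le) hTt0'
    have h3 : z t0 = u t0 := by simp [hzdef]
    have h4 : z T < u t0 := by rw [← h3]; exact h2
    have h5 : z T = u T * Real.exp (-(∫ s in t0..T, A s)) := rfl
    nlinarith [Real.exp_pos (-(∫ s in t0..T, A s)), h4, hu0]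
  -- 0 < v T
  have hvT : 0 < v T := by
    set z := fun t => v t * Real.exp (-(∫ s in t0..t, D s)) with hzdef
    have hzd : ∀ s ∈ Ioo t0 T, deriv z s = (C s * u s) * Real.exp (-(∫ r in t0..s, D r)) := by
      intro s hs
      have hspos : (0:ℝ) < s := lt_trans ht0 hs.1
      have h1 : HasDerivAt z ((C s * u s + D s * v s) * Real.exp (-(∫ r in t0..s, D r))
          + v s * (Real.exp (-(∫ r in t0..s, D r)) * (-(D s)))) s :=
        (hv s hspos).mul (((ftc_cont hD t0 s).neg).exp)
      have := h1.deriv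
      rw [this]; ring
    have hmono : StrictMonoOn z (Icc t0 T) := by
      apply strictMonoOn_of_deriv_pos (convex_Icc t0 T)
      · exact ((hvcont.mono hTsub).mul ((hID.neg.rexp).continuousOn))
      · intro s hs
        rw [interior_Icc] at hs
        rw [hzd s hs]
        have hg := hgood s ⟨hs.1.le, hs.2⟩
        have hCs := hC s (lt_trans ht0 hs.1)
        have : 0 < C s * u s := mul_pos_of_neg_of_neg hCs hg.1
        nlinarith [Real.exp_pos (-(∫ r in t0..s, D r))]
    have h2 := hmono (left_mem_Icc.2 hTt0'.le) (right_mem_Icc.2 hTt0'.le) hTt0'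
    have h3 : z t0 = v t0 := by simp [hzdef]
    have h4 : v t0 < z T := by rw [← h3]; exact h2
    have h5 : z T = v T * Real.exp (-(∫ s in t0..T, D s)) := rfl
    nlinarith [Real.exp_pos (-(∫ s in t0..T, D s)), h4, hv0]
  rcases hTBad.2 with h | h
  · linarith
  · linarith


lemma both_zero {u v A B C D : ℝ → ℝ}
    (hA : Continuous A) (hB : Continuous B) (hC : Continuous C) (hD : Continuous D)
    (hu : ∀ t > (0:ℝ), HasDerivAt u (A t * u t + B t * v t) t)
    (hv : ∀ t > (0:ℝ), HasDerivAt v (C t * u t + D t * v t) t)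
    {t0 : ℝ} (ht0 : 0 < t0) (hu0 : u t0 = 0) (hv0 : v t0 = 0) :
    ∀ t ≥ t0, u t = 0 ∧ v t = 0 := by
  intro T hT
  set r : ℝ → ℝ := fun t => u t ^ 2 + v t ^ 2 with hrdef
  set r' : ℝ → ℝ := fun t =>
    2 * u t * (A t * u t + B t * v t) + 2 * v t * (C t * u t + D t * v t) with hr'def
  have hrd : ∀ t > (0:ℝ), HasDerivAt r (r' t) t := by
    intro t ht
    have h1 := ((hu t ht).fun_pow 2).fun_add ((hv t ht).fun_pow 2)
    refine h1.congr_deriv ?_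
    simp only [hr'def]
    ring
  have hrcont : ContinuousOn r (Icc t0 T) := by
    intro s hs
    exact ((hrd s (lt_of_lt_of_le ht0 hs.1)).differentiableAt.continuousAt).continuousWithinAt
  -- bound for coefficients
  have hgc : ContinuousOn (fun t => |A t| + |B t| + |C t| + |D t|) (Icc t0 T) :=
    (((hA.abs.add hB.abs).add hC.abs).add hD.abs).continuousOn
  obtain ⟨K, hK⟩ := isCompact_Icc.exists_bound_of_continuousOn hgc
  have habs : ∀ t ∈ Icc t0 T, |A t| ≤ K ∧ |B t| ≤ K ∧ |C t| ≤ K ∧ |D t| ≤ K := by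
    intro t htIcc
    have h := hK t htIcc
    rw [Real.norm_eq_abs, abs_of_nonneg (by positivity)] at h
    refine ⟨?_, ?_, ?_, ?_⟩ <;>
      nlinarith [abs_nonneg (A t), abs_nonneg (B t), abs_nonneg (C t), abs_nonneg (D t)]
  have hK0 : 0 ≤ K := le_trans (abs_nonneg (A t0)) (habs t0 (left_mem_Icc.2 hT)).1
  have hbound : ∀ t ∈ Ico t0 T, ‖r' t‖ ≤ (4 * K) * ‖r t‖ + 0 := by
    intro t ht
    have htIcc : t ∈ Icc t0 T := ⟨ht.1, ht.2.le⟩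
    obtain ⟨hAt, hBt, hCt, hDt⟩ := habs t htIcc
    have hA2 := abs_le.1 hAt
    have hB2 := abs_le.1 hBt
    have hC2 := abs_le.1 hCt
    have hD2 := abs_le.1 hDt
    have hrt : ‖r t‖ = u t ^ 2 + v t ^ 2 := by
      rw [Real.norm_eq_abs, abs_of_nonneg (by positivity)]
    rw [hrt, Real.norm_eq_abs, add_zero]
    have hexp : r' t = 2*(A t)*(u t)^2 + 2*(B t)*(u t*v t) + 2*(C t)*(u t*v t)
        + 2*(D t)*(v t)^2 := by simp only [hr'def]; ring
    rw [hexp, abs_le]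
    constructor <;>
      nlinarith [mul_nonneg (by linarith [hA2.1] : (0:ℝ) ≤ K + A t) (sq_nonneg (u t)),
        mul_nonneg (by linarith [hA2.2] : (0:ℝ) ≤ K - A t) (sq_nonneg (u t)),
        mul_nonneg (by linarith [hD2.1] : (0:ℝ) ≤ K + D t) (sq_nonneg (v t)),
        mul_nonneg (by linarith [hD2.2] : (0:ℝ) ≤ K - D t) (sq_nonneg (v t)),
        mul_nonneg (by linarith [hB2.1] : (0:ℝ) ≤ K + B t) (sq_nonneg (u t - v t)),
        mul_nonneg (by linarith [hB2.2] : (0:ℝ) ≤ K - B t) (sq_nonneg (u t + v t)),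
        mul_nonneg (by linarith [hC2.1] : (0:ℝ) ≤ K + C t) (sq_nonneg (u t - v t)),
        mul_nonneg (by linarith [hC2.2] : (0:ℝ) ≤ K - C t) (sq_nonneg (u t + v t)),
        mul_nonneg (by linarith [hB2.1] : (0:ℝ) ≤ K + B t) (sq_nonneg (u t + v t)),
        mul_nonneg (by linarith [hB2.2] : (0:ℝ) ≤ K - B t) (sq_nonneg (u t - v t)),
        mul_nonneg (by linarith [hC2.1] : (0:ℝ) ≤ K + C t) (sq_nonneg (u t + v t)),
        mul_nonneg (by linarith [hC2.2] : (0:ℝ) ≤ K - C t) (sq_nonneg (u t - v t))]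
  have hgron := norm_le_gronwallBound_of_norm_deriv_right_le hrcont
    (fun t ht => (hrd t (lt_of_lt_of_le ht0 ht.1)).hasDerivWithinAt)
    (by simp [hrdef, hu0, hv0] : ‖r t0‖ ≤ 0) hbound T (right_mem_Icc.2 hT)
  rw [gronwallBound_ε0_δ0] at hgron
  have hr0 : u T ^ 2 + v T ^ 2 ≤ 0 := by
    have : |r T| ≤ 0 := by rwa [Real.norm_eq_abs] at hgron
    have h2 := abs_nonneg (r T)
    have h3 : r T = 0 := le_antisymm (le_trans (le_abs_self _) this) (by positivity)
    simp [hrdef] at h3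
    simp [hrdef]
    linarith [h3]
  have hu2 : u T ^ 2 = 0 := le_antisymm (by nlinarith [sq_nonneg (v T)]) (sq_nonneg _)
  have hv2 : v T ^ 2 = 0 := le_antisymm (by nlinarith [sq_nonneg (u T)]) (sq_nonneg _)
  exact ⟨(pow_eq_zero_iff two_ne_zero).1 hu2, (pow_eq_zero_iff two_ne_zero).1 hv2⟩


lemma tendsto_of_monotoneOn {f : ℝ → ℝ} {T M : ℝ} (hmono : MonotoneOn f (Ici T))
    (hb : ∀ t ≥ T, f t ≤ M) : ∃ L, Tendsto f atTop (nhds L) := by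
  set g : ℝ → ℝ := fun t => f (max t T) with hgdef
  have hgmono : Monotone g := fun s t hst =>
    hmono (le_max_right s T) (le_max_right t T) (max_le_max hst (le_refl T))
  have hgb : BddAbove (range g) := ⟨M, forall_mem_range.2 fun t => hb _ (le_max_right _ _)⟩
  refine ⟨_, (tendsto_atTop_ciSup hgmono hgb).congr' ?_⟩
  filter_upwards [eventually_ge_atTop T] with t ht
  simp [hgdef, max_eq_left ht]

lemma tendsto_of_antitoneOn {f : ℝ → ℝ} {T M : ℝ} (hanti : AntitoneOn f (Ici T))
    (hb : ∀ t ≥ T, M ≤ f t) : ∃ L, Tendsto f atTop (nhds L) := by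
  have hmono : MonotoneOn (fun t => -(f t)) (Ici T) :=
    fun s hs t ht hst => neg_le_neg (hanti hs ht hst)
  obtain ⟨L, hL⟩ := tendsto_of_monotoneOn hmono (fun t ht => neg_le_neg (hb t ht))
  refine ⟨-L, ?_⟩
  have := hL.neg
  simpa using this

lemma deriv_limit_zero {f : ℝ → ℝ} (hf : Differentiable ℝ f) {L α : ℝ}
    (hL : Tendsto f atTop (nhds L)) (hα : Tendsto (deriv f) atTop (nhds α)) : α = 0 := by
  have hexists : ∀ n : ℕ, ∃ ξ ∈ Ioo (n:ℝ) ((n:ℝ)+1),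
      deriv f ξ = (f ((n:ℝ)+1) - f (n:ℝ)) / (((n:ℝ)+1) - (n:ℝ)) := fun n =>
    exists_hasDerivAt_eq_slope f (deriv f) (by linarith)
      (hf.continuous.continuousOn) (fun x _ => (hf x).hasDerivAt)
  choose ξ hξmem hξ using hexists
  have hξtend : Tendsto ξ atTop atTop :=
    tendsto_atTop_mono (fun n => (hξmem n).1.le) tendsto_natCast_atTop_atTop
  have h1 : Tendsto (fun n => deriv f (ξ n)) atTop (nhds α) := hα.comp hξtend
  have h2 : Tendsto (fun n => deriv f (ξ n)) atTop (nhds 0) := by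
    have heq : (fun n : ℕ => deriv f (ξ n)) = fun n : ℕ => f ((n:ℝ)+1) - f (n:ℝ) := by
      funext n
      rw [hξ n]
      norm_num
    rw [heq]
    have ht1 : Tendsto (fun n : ℕ => f ((n:ℝ)+1)) atTop (nhds L) :=
      hL.comp (tendsto_atTop_add_const_right _ 1 tendsto_natCast_atTop_atTop)
    have ht2 : Tendsto (fun n : ℕ => f (n:ℝ)) atTop (nhds L) :=
      hL.comp tendsto_natCast_atTop_atTop
    simpa using ht1.sub ht2
  exact tendsto_nhds_unique h1 h2

lemma sign_after_neg {u : ℝ → ℝ} {t d : ℝ} (h : HasDerivAt u d t) (hu0 : u t = 0) (hd : d < 0) :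
    ∀ᶠ s in nhdsWithin t (Ioi t), u s < 0 := by
  have hslope := hasDerivAt_iff_tendsto_slope.1 h
  have h1 : ∀ᶠ s in nhdsWithin t {t}ᶜ, slope u t s < 0 := hslope.eventually (eventually_lt_nhds hd)
  have h2 : ∀ᶠ s in nhdsWithin t (Ioi t), slope u t s < 0 :=
    h1.filter_mono (nhdsWithin_mono t (fun s hs => ne_of_gt hs))
  filter_upwards [h2, self_mem_nhdsWithin] with s hs hst
  have heq : u s = slope u t s * (s - t) := by
    rw [slope_def_field, hu0]
    have hne : s - t ≠ 0 := ne_of_gt (sub_pos.2 hst)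
    field_simp
    ring
  rw [heq]
  exact mul_neg_of_neg_of_pos hs (sub_pos.2 hst)

lemma sign_after_pos {u : ℝ → ℝ} {t d : ℝ} (h : HasDerivAt u d t) (hu0 : u t = 0) (hd : 0 < d) :
    ∀ᶠ s in nhdsWithin t (Ioi t), 0 < u s := by
  have := sign_after_neg (h.neg) (by simp [hu0]) (by simpa using hd)
  filter_upwards [this] with s hs
  simpa using hs

lemma converges (a b c k m : ℝ) (ha : 0 < a) (hb : 0 < b) (hc : 0 < c) (hc1 : c < 1)
    (hk : 0 < k) (hk1 : k < 1/a - 1) (hm : 0 < m) {p : ℝ × ℝ}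
    (huniq : ∀ q : ℝ × ℝ, (0 < q.1 ∧ 0 < q.2 ∧ b * q.1 * (1 - q.1 - c * q.2) = 0 ∧
       q.2 * (1 / (1 + k * q.1) - q.2 - a * q.1 - m * q.1 * q.2) = 0) → q = p)
    (x y : ℝ → ℝ) (hdx : Differentiable ℝ x) (hdy : Differentiable ℝ y)
    (hx' : ∀ t ≥ (0:ℝ), deriv x t = b * x t * (1 - x t - c * y t))
    (hy' : ∀ t ≥ (0:ℝ), deriv y t = y t * (1 / (1 + k * x t) - y t - a * x t - m * x t * y t))
    (hx0 : 0 < x 0) (hy0 : 0 < y 0) :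
    Tendsto (fun t => (x t, y t)) atTop (nhds p) := by
  have hxc : Continuous x := hdx.continuous
  have hyc : Continuous y := hdy.continuous
  -- positivity
  have hxpos : ∀ t ≥ (0:ℝ), 0 < x t := by
    apply pos_of_deriv_eq_mul hdx (g := fun t => b * (1 - x t - c * y t))
    · exact (continuous_const.mul ((continuous_const.sub hxc).sub
        (continuous_const.mul hyc))).continuousOn
    · intro t ht; rw [hx' t ht]; ring
    · exact hx0
  have h1kx : ∀ t ≥ (0:ℝ), (1:ℝ) ≤ 1 + k * x t := by
    intro t ht; nlinarith [hxpos t ht]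
  have h1kxpos : ∀ t ≥ (0:ℝ), (0:ℝ) < 1 + k * x t := fun t ht => lt_of_lt_of_le one_pos (h1kx t ht)
  have hypos : ∀ t ≥ (0:ℝ), 0 < y t := by
    apply pos_of_deriv_eq_mul hdy
      (g := fun t => (1 + k * x t)⁻¹ - y t - a * x t - m * x t * y t)
    · exact (((ContinuousOn.inv₀ (continuous_const.add (continuous_const.mul hxc)).continuousOn
          (fun t ht => ne_of_gt (h1kxpos t ht))).sub hyc.continuousOn).sub
          (continuous_const.mul hxc).continuousOn).sub
          ((continuous_const.mul hxc).mul hyc).continuousOn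
    · intro t ht; rw [hy' t ht, one_div]
    · exact hy0
  -- upper bounds
  have hxle : ∀ t ≥ (0:ℝ), x t ≤ max (x 0) 1 := by
    apply le_bound_of_deriv_neg hdx (le_max_left _ _)
    intro t ht hgt
    rw [hx' t ht]
    have h1 : (1:ℝ) < x t := lt_of_le_of_lt (le_max_right _ _) hgt
    have hq : 1 - x t - c * y t < 0 := by nlinarith [mul_pos hc (hypos t ht)]
    exact mul_neg_of_pos_of_neg (mul_pos hb (hxpos t ht)) hq
  have hyle : ∀ t ≥ (0:ℝ), y t ≤ max (y 0) 1 := by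
    apply le_bound_of_deriv_neg hdy (le_max_left _ _)
    intro t ht hgt
    rw [hy' t ht, one_div]
    have h1 : (1:ℝ) < y t := lt_of_le_of_lt (le_max_right _ _) hgt
    have h2 : (1 + k * x t)⁻¹ ≤ 1 := by
      rw [inv_le_one_iff₀]
      right; exact h1kx t ht
    have hq : (1 + k * x t)⁻¹ - y t - a * x t - m * x t * y t < 0 := by
      nlinarith [mul_pos ha (hxpos t ht), mul_pos (mul_pos hm (hxpos t ht)) (hypos t ht)]
    exact mul_neg_of_pos_of_neg (hypos t ht) hq
  -- derivative functions
  set u : ℝ → ℝ := deriv x with hudef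
  set v : ℝ → ℝ := deriv y with hvdef
  have hxd : ∀ t, HasDerivAt x (u t) t := fun t => (hdx t).hasDerivAt
  have hyd : ∀ t, HasDerivAt y (v t) t := fun t => (hdy t).hasDerivAt
  set P : ℝ → ℝ := fun t => max (1 + k * x t) 1 with hPdef
  have hPcont : Continuous P :=
    (continuous_const.add (continuous_const.mul hxc)).max continuous_const
  have hP1 : ∀ t, (1:ℝ) ≤ P t := fun t => le_max_right _ _
  have hPpos : ∀ t, (0:ℝ) < P t := fun t => lt_of_lt_of_le one_pos (hP1 t)
  have hPeq : ∀ t ≥ (0:ℝ), P t = 1 + k * x t := fun t ht => max_eq_left (h1kx t ht)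
  set A : ℝ → ℝ := fun t => b * (1 - 2 * x t - c * y t) with hAdef
  set Bf : ℝ → ℝ := fun t => -(b * c * x t) with hBdef
  set Cf : ℝ → ℝ := fun t => y t * (-(k * ((P t)^2)⁻¹) - a - m * y t) with hCdef
  set Df : ℝ → ℝ := fun t => (P t)⁻¹ - 2 * y t - a * x t - 2 * m * x t * y t with hDdef
  have hAc : Continuous A :=
    continuous_const.mul ((continuous_const.sub (continuous_const.mul hxc)).sub
      (continuous_const.mul hyc))
  have hBc : Continuous Bf := (((continuous_const.mul continuous_const).mul hxc)).neg
  have hPsqinv : Continuous (fun t => ((P t)^2)⁻¹) :=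
    (hPcont.pow 2).inv₀ (fun t => ne_of_gt (pow_pos (hPpos t) 2))
  have hCc : Continuous Cf :=
    hyc.mul ((((continuous_const.mul hPsqinv)).neg.sub continuous_const).sub (continuous_const.mul hyc))
  have hPinv : Continuous (fun t => (P t)⁻¹) := hPcont.inv₀ (fun t => ne_of_gt (hPpos t))
  have hDc : Continuous Df :=
    ((hPinv.sub (continuous_const.mul hyc)).sub (continuous_const.mul hxc)).sub
      ((continuous_const.mul hxc).mul hyc)
  have hud : ∀ t > (0:ℝ), HasDerivAt u (A t * u t + Bf t * v t) t := by
    intro t ht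
    have hev : u =ᶠ[nhds t] fun s => b * x s * (1 - x s - c * y s) :=
      eventuallyEq_of_mem (Ioi_mem_nhds ht) (fun s hs => hx' s (le_of_lt hs))
    rw [hev.hasDerivAt_iff]
    have h1 : HasDerivAt (fun s => b * x s) (b * u t) t := (hxd t).const_mul b
    have h2 : HasDerivAt (fun s => 1 - x s - c * y s) (-(u t) - c * v t) t :=
      ((hxd t).const_sub 1).sub ((hyd t).const_mul c)
    have := h1.fun_mul h2
    refine this.congr_deriv ?_
    simp only [hAdef, hBdef]
    ring
  have hvd : ∀ t > (0:ℝ), HasDerivAt v (Cf t * u t + Df t * v t) t := by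
    intro t ht
    have hev : v =ᶠ[nhds t] fun s => y s * ((1 + k * x s)⁻¹ - y s - a * x s - m * x s * y s) :=
      eventuallyEq_of_mem (Ioi_mem_nhds ht)
        (fun s hs => by rw [hy' s (le_of_lt hs), one_div])
    rw [hev.hasDerivAt_iff]
    have hne : (1 + k * x t) ≠ 0 := ne_of_gt (h1kxpos t ht.le)
    have h0 : HasDerivAt (fun s => 1 + k * x s) (k * u t) t :=
      ((hxd t).const_mul k).const_add 1
    have h1 : HasDerivAt (fun s => (1 + k * x s)⁻¹) (-(k * u t) / (1 + k * x t)^2) t :=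
      h0.inv hne
    have h2 : HasDerivAt (fun s => m * x s * y s) ((m * u t) * y t + (m * x t) * v t) t :=
      ((hxd t).const_mul m).mul (hyd t)
    have h3 : HasDerivAt (fun s => (1 + k * x s)⁻¹ - y s - a * x s - m * x s * y s)
        (-(k * u t) / (1 + k * x t)^2 - v t - a * u t - ((m * u t) * y t + (m * x t) * v t)) t :=
      ((h1.sub (hyd t)).sub ((hxd t).const_mul a)).sub h2
    have := (hyd t).fun_mul h3
    refine this.congr_deriv ?_
    have hPt : P t = 1 + k * x t := hPeq t ht.le
    simp only [hCdef, hDdef, hPt]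
    field_simp
    ring
  have hBneg : ∀ t > (0:ℝ), Bf t < 0 := by
    intro t ht
    simp only [hBdef]
    exact neg_lt_zero.mpr (mul_pos (mul_pos hb hc) (hxpos t ht.le))
  have hCneg : ∀ t > (0:ℝ), Cf t < 0 := by
    intro t ht
    simp only [hCdef]
    apply mul_neg_of_pos_of_neg (hypos t ht.le)
    nlinarith [mul_pos hk (inv_pos.2 (pow_pos (hPpos t) 2)), mul_pos hm (hypos t ht.le)]
  -- main convergence given eventual sign constancy of u and v
  have main : ∀ T > (0:ℝ), ((∀ s ≥ T, u s ≤ 0) ∨ (∀ s ≥ T, 0 ≤ u s)) →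
      ((∀ s ≥ T, v s ≤ 0) ∨ (∀ s ≥ T, 0 ≤ v s)) →
      Tendsto (fun t => (x t, y t)) atTop (nhds p) := by
    intro T hT hus hvs
    have hxlim : ∃ L, Tendsto x atTop (nhds L) := by
      rcases hus with h | h
      · have hanti : AntitoneOn x (Ici T) := by
          apply antitoneOn_of_deriv_nonpos (convex_Ici T) hxc.continuousOn
            (hdx.differentiableOn)
          intro z hz
          rw [interior_Ici] at hz
          exact h z (le_of_lt hz)
        exact tendsto_of_antitoneOn hanti (fun t ht => (hxpos t (le_trans hT.le ht)).le)
      · have hmono : MonotoneOn x (Ici T) := by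
          apply monotoneOn_of_deriv_nonneg (convex_Ici T) hxc.continuousOn
            (hdx.differentiableOn)
          intro z hz
          rw [interior_Ici] at hz
          exact h z (le_of_lt hz)
        exact tendsto_of_monotoneOn hmono (fun t ht => hxle t (le_trans hT.le ht))
    have hylim : ∃ M, Tendsto y atTop (nhds M) := by
      rcases hvs with h | h
      · have hanti : AntitoneOn y (Ici T) := by
          apply antitoneOn_of_deriv_nonpos (convex_Ici T) hyc.continuousOn
            (hdy.differentiableOn)
          intro z hz
          rw [interior_Ici] at hz
          exact h z (le_of_lt hz)
        exact tendsto_of_antitoneOn hanti (fun t ht => (hypos t (le_trans hT.le ht)).le)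
      · have hmono : MonotoneOn y (Ici T) := by
          apply monotoneOn_of_deriv_nonneg (convex_Ici T) hyc.continuousOn
            (hdy.differentiableOn)
          intro z hz
          rw [interior_Ici] at hz
          exact h z (le_of_lt hz)
        exact tendsto_of_monotoneOn hmono (fun t ht => hyle t (le_trans hT.le ht))
    obtain ⟨L, hL⟩ := hxlim
    obtain ⟨M, hM⟩ := hylim
    have hL0 : 0 ≤ L := by
      apply ge_of_tendsto hL
      filter_upwards [eventually_ge_atTop (0:ℝ)] with t ht
      exact (hxpos t ht).le
    have hM0 : 0 ≤ M := by
      apply ge_of_tendsto hM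
      filter_upwards [eventually_ge_atTop (0:ℝ)] with t ht
      exact (hypos t ht).le
    have h1kL : (0:ℝ) < 1 + k * L := by nlinarith
    -- limit equations
    have hFLM : b * L * (1 - L - c * M) = 0 := by
      have h1 : Tendsto (fun t => b * x t * (1 - x t - c * y t)) atTop
          (nhds (b * L * (1 - L - c * M))) :=
        (tendsto_const_nhds.mul hL).mul
          ((tendsto_const_nhds.sub hL).sub (tendsto_const_nhds.mul hM))
      have hutend : Tendsto u atTop (nhds (b * L * (1 - L - c * M))) := by
        apply h1.congr'
        filter_upwards [eventually_ge_atTop (0:ℝ)] with t ht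
        exact (hx' t ht).symm
      exact deriv_limit_zero hdx hL (hudef ▸ hutend)
    have hinvtend : Tendsto (fun t => (1 + k * x t)⁻¹) atTop (nhds ((1 + k * L)⁻¹)) :=
      (tendsto_const_nhds.add (tendsto_const_nhds.mul hL)).inv₀ (ne_of_gt h1kL)
    have hGLM : M * ((1 + k * L)⁻¹ - M - a * L - m * L * M) = 0 := by
      have h1 : Tendsto (fun t => y t * ((1 + k * x t)⁻¹ - y t - a * x t - m * x t * y t)) atTop
          (nhds (M * ((1 + k * L)⁻¹ - M - a * L - m * L * M))) :=
        hM.mul (((hinvtend.sub hM).sub (tendsto_const_nhds.mul hL)).sub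
          ((tendsto_const_nhds.mul hL).mul hM))
      have hvtend : Tendsto v atTop (nhds (M * ((1 + k * L)⁻¹ - M - a * L - m * L * M))) := by
        apply h1.congr'
        filter_upwards [eventually_ge_atTop (0:ℝ)] with t ht
        rw [hy' t ht, one_div]
      exact deriv_limit_zero hdy hM (hvdef ▸ hvtend)
    -- case analysis on L and M
    rcases eq_or_lt_of_le hL0 with hLz | hLpos
    · -- L = 0 : impossible
      exfalso
      have hcM : c * M < 1 := by
        have h2 : M * (1 - M) = 0 := by
          have h3 := hGLM
          rw [← hLz] at h3
          simpa using h3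
        rcases mul_eq_zero.1 h2 with h | h
        · rw [h]; norm_num
        · have hM1 : M = 1 := by linarith
          rw [hM1, mul_one]; exact hc1
      have hβ : 0 < 1 - L - c * M := by rw [← hLz]; linarith
      have hφ : Tendsto (fun t => 1 - x t - c * y t) atTop (nhds (1 - L - c * M)) :=
        (tendsto_const_nhds.sub hL).sub (tendsto_const_nhds.mul hM)
      have hev : ∀ᶠ t in atTop, 0 < 1 - x t - c * y t := hφ.eventually (eventually_gt_nhds hβ)
      obtain ⟨T1, hT1⟩ := eventually_atTop.1 hev
      set T2 := max T1 1 with hT2def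
      have hT20 : (0:ℝ) < T2 := lt_of_lt_of_le one_pos (le_max_right _ _)
      have hmono : MonotoneOn x (Ici T2) := by
        apply monotoneOn_of_deriv_nonneg (convex_Ici T2) hxc.continuousOn hdx.differentiableOn
        intro z hz
        rw [interior_Ici] at hz
        have hz0 : (0:ℝ) ≤ z := le_trans hT20.le (le_of_lt hz)
        rw [← hudef, hx' z hz0]
        have := hT1 z (le_trans (le_max_left _ _) (le_of_lt hz))
        exact (mul_pos (mul_pos hb (hxpos z hz0)) this).le
      have hxT2L : x T2 ≤ L := by
        apply ge_of_tendsto hL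
        filter_upwards [eventually_ge_atTop T2] with t ht
        exact hmono (self_mem_Ici) ht (by exact ht)
      have := hxpos T2 hT20.le
      linarith [hLz]
    · rcases eq_or_lt_of_le hM0 with hMz | hMpos
      · -- M = 0, L > 0 : impossible
        exfalso
        have hL1 : L = 1 := by
          have h3 := hFLM
          rw [← hMz] at h3
          have h4 : b * L ≠ 0 := ne_of_gt (mul_pos hb hLpos)
          have h5 : 1 - L - c * 0 = 0 := by
            rcases mul_eq_zero.1 h3 with h | h
            · exact absurd h h4
            · exact h
          linarith [h5]
        have hk2 : a * (1 + k) < 1 := by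
          have h3 : k + 1 < 1/a := by linarith
          have h4 : a * (1/a) = 1 := by field_simp
          nlinarith
        have h1k : (0:ℝ) < 1 + k := by linarith
        have hβ : 0 < (1 + k * L)⁻¹ - M - a * L - m * L * M := by
          rw [← hMz, hL1]
          have : a < (1 + k)⁻¹ := by nlinarith [mul_inv_cancel₀ (ne_of_gt h1k)]
          simp only [mul_zero, sub_zero, mul_one]
          linarith
        have hψ : Tendsto (fun t => (1 + k * x t)⁻¹ - y t - a * x t - m * x t * y t) atTop
            (nhds ((1 + k * L)⁻¹ - M - a * L - m * L * M)) :=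
          ((hinvtend.sub hM).sub (tendsto_const_nhds.mul hL)).sub
            ((tendsto_const_nhds.mul hL).mul hM)
        have hev : ∀ᶠ t in atTop, 0 < (1 + k * x t)⁻¹ - y t - a * x t - m * x t * y t :=
          hψ.eventually (eventually_gt_nhds hβ)
        obtain ⟨T1, hT1⟩ := eventually_atTop.1 hev
        set T2 := max T1 1 with hT2def
        have hT20 : (0:ℝ) < T2 := lt_of_lt_of_le one_pos (le_max_right _ _)
        have hmono : MonotoneOn y (Ici T2) := by
          apply monotoneOn_of_deriv_nonneg (convex_Ici T2) hyc.continuousOn hdy.differentiableOn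
          intro z hz
          rw [interior_Ici] at hz
          have hz0 : (0:ℝ) ≤ z := le_trans hT20.le (le_of_lt hz)
          rw [← hvdef, hy' z hz0, one_div]
          have := hT1 z (le_trans (le_max_left _ _) (le_of_lt hz))
          exact (mul_pos (hypos z hz0) this).le
        have hyT2M : y T2 ≤ M := by
          apply ge_of_tendsto hM
          filter_upwards [eventually_ge_atTop T2] with t ht
          exact hmono (self_mem_Ici) ht (by exact ht)
        have := hypos T2 hT20.le
        linarith [hMz]
      · -- L > 0, M > 0 : converge to (L,M) = p
        have hq := huniq (L, M) ⟨hLpos, hMpos, by simpa using hFLM,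
          by rw [one_div]; simpa using hGLM⟩
        rw [← hq]
        exact hL.prodMk_nhds hM
  -- case analysis
  by_cases hzero : ∃ t0 > (0:ℝ), u t0 = 0 ∧ v t0 = 0
  · -- solution is at an equilibrium from time t0 on
    obtain ⟨t0, ht0, hu0, hv0⟩ := hzero
    have hz := both_zero hAc hBc hCc hDc hud hvd ht0 hu0 hv0
    have hconstx : ∀ t ≥ t0, x t = x t0 := by
      intro t ht
      have hcst := constant_of_has_deriv_right_zero (f := x) (a := t0) (b := t)
        hxc.continuousOn
        (fun s hs => by
          have h := hxd s
          rw [(hz s hs.1).1] at h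
          exact h.hasDerivWithinAt)
      exact hcst t (right_mem_Icc.2 ht)
    have hconsty : ∀ t ≥ t0, y t = y t0 := by
      intro t ht
      have hcst := constant_of_has_deriv_right_zero (f := y) (a := t0) (b := t)
        hyc.continuousOn
        (fun s hs => by
          have h := hyd s
          rw [(hz s hs.1).2] at h
          exact h.hasDerivWithinAt)
      exact hcst t (right_mem_Icc.2 ht)
    have hequi : (x t0, y t0) = p := by
      apply huniq
      refine ⟨hxpos t0 ht0.le, hypos t0 ht0.le, ?_, ?_⟩
      · rw [← hx' t0 ht0.le]; exact hu0
      · rw [← hy' t0 ht0.le]; exact hv0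
    have htend : Tendsto (fun t => (x t, y t)) atTop (nhds (x t0, y t0)) := by
      apply Tendsto.congr' _ tendsto_const_nhds
      filter_upwards [eventually_ge_atTop t0] with t ht
      rw [hconstx t ht, hconsty t ht]
    rwa [hequi] at htend
  · push_neg at hzero
    by_cases hc1 : ∃ t0 > (0:ℝ), u t0 < 0 ∧ 0 < v t0
    · obtain ⟨t0, ht0, h1, h2⟩ := hc1
      have hinv := cone_invariant hAc hDc hud hvd hBneg hCneg ht0 h1 h2
      exact main t0 ht0 (Or.inl (fun s hs => (hinv s hs).1.le))
        (Or.inr (fun s hs => (hinv s hs).2.le))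
    · by_cases hc2 : ∃ t0 > (0:ℝ), 0 < u t0 ∧ v t0 < 0
      · obtain ⟨t0, ht0, h1, h2⟩ := hc2
        have hinv := cone_invariant (u := v) (v := u) (A := Df) (B := Cf) (C := Bf) (D := A)
          hDc hAc
          (fun t ht => by have := hvd t ht; convert this using 1; ring)
          (fun t ht => by have := hud t ht; convert this using 1; ring)
          hCneg hBneg ht0 h2 h1
        exact main t0 ht0 (Or.inr (fun s hs => (hinv s hs).2.le))
          (Or.inl (fun s hs => (hinv s hs).1.le))
      · -- neither cone is ever visited: u and v never vanish on (0,∞)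
        have hunz : ∀ t > (0:ℝ), u t ≠ 0 := by
          intro t ht h0
          have hvne : v t ≠ 0 := hzero t ht h0
          have hd : HasDerivAt u (A t * u t + Bf t * v t) t := hud t ht
          have hvc : ContinuousAt v t := (hvd t ht).differentiableAt.continuousAt
          rcases hvne.lt_or_gt with hvneg | hvpos
          · -- u' > 0 at t : just after, u > 0 and v < 0, contradicting hc2
            have hdpos : 0 < A t * u t + Bf t * v t := by
              rw [h0, mul_zero, zero_add]
              exact mul_pos_of_neg_of_neg (hBneg t ht) hvneg
            have hev1 := sign_after_pos hd h0 hdpos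
            have hev2 : ∀ᶠ s in nhdsWithin t (Ioi t), v s < 0 :=
              (hvc.eventually (eventually_lt_nhds hvneg)).filter_mono nhdsWithin_le_nhds
            obtain ⟨s, hs⟩ := ((hev1.and hev2).and self_mem_nhdsWithin).exists
            exact hc2 ⟨s, lt_trans ht hs.2, hs.1.1, hs.1.2⟩
          · -- u' < 0 at t : just after, u < 0 and v > 0, contradicting hc1
            have hdneg : A t * u t + Bf t * v t < 0 := by
              rw [h0, mul_zero, zero_add]
              exact mul_neg_of_neg_of_pos (hBneg t ht) hvpos
            have hev1 := sign_after_neg hd h0 hdneg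
            have hev2 : ∀ᶠ s in nhdsWithin t (Ioi t), 0 < v s :=
              (hvc.eventually (eventually_gt_nhds hvpos)).filter_mono nhdsWithin_le_nhds
            obtain ⟨s, hs⟩ := ((hev1.and hev2).and self_mem_nhdsWithin).exists
            exact hc1 ⟨s, lt_trans ht hs.2, hs.1.1, hs.1.2⟩
        have hvnz : ∀ t > (0:ℝ), v t ≠ 0 := by
          intro t ht h0
          have hune : u t ≠ 0 := by
            intro hu0
            exact hzero t ht hu0 h0
          have hd : HasDerivAt v (Cf t * u t + Df t * v t) t := hvd t ht
          have huc : ContinuousAt u t := (hud t ht).differentiableAt.continuousAt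
          rcases hune.lt_or_gt with huneg | hupos
          · -- v' > 0 at t : just after, v > 0 and u < 0, contradicting hc1
            have hdpos : 0 < Cf t * u t + Df t * v t := by
              rw [h0, mul_zero, add_zero]
              exact mul_pos_of_neg_of_neg (hCneg t ht) huneg
            have hev1 := sign_after_pos hd h0 hdpos
            have hev2 : ∀ᶠ s in nhdsWithin t (Ioi t), u s < 0 :=
              (huc.eventually (eventually_lt_nhds huneg)).filter_mono nhdsWithin_le_nhds
            obtain ⟨s, hs⟩ := ((hev1.and hev2).and self_mem_nhdsWithin).exists
            exact hc1 ⟨s, lt_trans ht hs.2, hs.1.2, hs.1.1⟩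
          · -- v' < 0 at t : just after, v < 0 and u > 0, contradicting hc2
            have hdneg : Cf t * u t + Df t * v t < 0 := by
              rw [h0, mul_zero, add_zero]
              exact mul_neg_of_neg_of_pos (hCneg t ht) hupos
            have hev1 := sign_after_neg hd h0 hdneg
            have hev2 : ∀ᶠ s in nhdsWithin t (Ioi t), 0 < u s :=
              (huc.eventually (eventually_gt_nhds hupos)).filter_mono nhdsWithin_le_nhds
            obtain ⟨s, hs⟩ := ((hev1.and hev2).and self_mem_nhdsWithin).exists
            exact hc2 ⟨s, lt_trans ht hs.2, hs.1.2, hs.1.1⟩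
        -- constant sign on [1, ∞) by the intermediate value theorem
        have hucont : ∀ s : ℝ, 1 ≤ s → ContinuousOn u (Icc 1 s) := by
          intro s hs z hz
          exact ((hud z (lt_of_lt_of_le one_pos hz.1)).differentiableAt.continuousAt).continuousWithinAt
        have hvcont : ∀ s : ℝ, 1 ≤ s → ContinuousOn v (Icc 1 s) := by
          intro s hs z hz
          exact ((hvd z (lt_of_lt_of_le one_pos hz.1)).differentiableAt.continuousAt).continuousWithinAt
        have husign : (∀ s ≥ (1:ℝ), u s ≤ 0) ∨ (∀ s ≥ (1:ℝ), 0 ≤ u s) := by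
          rcases (hunz 1 one_pos).lt_or_gt with h1 | h1
          · left
            intro s hs
            by_contra hcon
            push_neg at hcon
            have h0mem : (0:ℝ) ∈ Icc (u 1) (u s) := ⟨h1.le, hcon.le⟩
            obtain ⟨z, hz, hz0⟩ := intermediate_value_Icc hs (hucont s hs) h0mem
            exact hunz z (lt_of_lt_of_le one_pos hz.1) hz0
          · right
            intro s hs
            by_contra hcon
            push_neg at hcon
            have h0mem : (0:ℝ) ∈ Icc (u s) (u 1) := ⟨hcon.le, h1.le⟩
            obtain ⟨z, hz, hz0⟩ := intermediate_value_Icc' hs (hucont s hs) h0mem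
            exact hunz z (lt_of_lt_of_le one_pos hz.1) hz0
        have hvsign : (∀ s ≥ (1:ℝ), v s ≤ 0) ∨ (∀ s ≥ (1:ℝ), 0 ≤ v s) := by
          rcases (hvnz 1 one_pos).lt_or_gt with h1 | h1
          · left
            intro s hs
            by_contra hcon
            push_neg at hcon
            have h0mem : (0:ℝ) ∈ Icc (v 1) (v s) := ⟨h1.le, hcon.le⟩
            obtain ⟨z, hz, hz0⟩ := intermediate_value_Icc hs (hvcont s hs) h0mem
            exact hvnz z (lt_of_lt_of_le one_pos hz.1) hz0
          · right
            intro s hs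
            by_contra hcon
            push_neg at hcon
            have h0mem : (0:ℝ) ∈ Icc (v s) (v 1) := ⟨hcon.le, h1.le⟩
            obtain ⟨z, hz, hz0⟩ := intermediate_value_Icc' hs (hvcont s hs) h0mem
            exact hvnz z (lt_of_lt_of_le one_pos hz.1) hz0
        exact main 1 one_pos husign hvsign
/-- **Global stability of the positive equilibrium E₂* of system (2).**
If a,b,c,k,m > 0 with 0 < a < 1, 0 < c < 1 and 0 < k < 1/a − 1, then system (2)
has a unique positive equilibrium (x*, y*), and every positive solution
converges to it as t → ∞. -/
theorem global_stability_positive_equilibrium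
    (a b c k m : ℝ) (ha : 0 < a) (ha1 : a < 1) (hb : 0 < b)
    (hc : 0 < c) (hc1 : c < 1) (hk : 0 < k) (hk1 : k < 1 / a - 1) (hm : 0 < m) :
    ∃ p : ℝ × ℝ,
      (0 < p.1 ∧ 0 < p.2 ∧
        b * p.1 * (1 - p.1 - c * p.2) = 0 ∧
        p.2 * (1 / (1 + k * p.1) - p.2 - a * p.1 - m * p.1 * p.2) = 0) ∧
      (∀ q : ℝ × ℝ,
        (0 < q.1 ∧ 0 < q.2 ∧
          b * q.1 * (1 - q.1 - c * q.2) = 0 ∧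
          q.2 * (1 / (1 + k * q.1) - q.2 - a * q.1 - m * q.1 * q.2) = 0) →
        q = p) ∧
      (∀ x y : ℝ → ℝ, Differentiable ℝ x → Differentiable ℝ y →
        (∀ t ≥ (0 : ℝ), deriv x t = b * x t * (1 - x t - c * y t)) →
        (∀ t ≥ (0 : ℝ), deriv y t =
          y t * (1 / (1 + k * x t) - y t - a * x t - m * x t * y t)) →
        0 < x 0 → 0 < y 0 →
        Filter.Tendsto (fun t => (x t, y t)) Filter.atTop (nhds p)) := by
  obtain ⟨xs, hxsmem, hxs0, hxsuniq⟩ := Hfun_exists_root ha trivial hc hc1 hk hk1 hm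
  have hxpos : 0 < xs := hxsmem.1
  have hxlt : xs < 1 := hxsmem.2
  have hys : 0 < (1 - xs)/c := div_pos (by linarith) hc
  have h1kxs : (0:ℝ) < 1 + k * xs := by nlinarith
  refine ⟨(xs, (1 - xs)/c), ⟨hxpos, hys, ?_, ?_⟩, ?_, ?_⟩
  · show b * xs * (1 - xs - c * ((1 - xs)/c)) = 0
    field_simp
    ring
  · show (1 - xs)/c * (1 / (1 + k * xs) - (1 - xs)/c - a * xs - m * xs * ((1 - xs)/c)) = 0
    have h2 : 1 / (1 + k * xs) - (1 - xs)/c - a * xs - m * xs * ((1 - xs)/c)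
        = Hfun a c k m xs := by
      unfold Hfun
      rw [one_div]
      field_simp
      ring
    rw [h2, hxs0, mul_zero]
  · -- uniqueness
    rintro ⟨q1, q2⟩ ⟨hq1, hq2, he1, he2⟩
    simp only at hq1 hq2 he1 he2
    have hfac1 : 1 - q1 - c * q2 = 0 := by
      rcases mul_eq_zero.1 he1 with h | h
      · exact absurd h (ne_of_gt (mul_pos hb hq1))
      · exact h
    have hq2eq : q2 = (1 - q1)/c := by
      field_simp
      linarith
    have hq1lt : q1 < 1 := by nlinarith [mul_pos hc hq2]
    have hfac2 : 1/(1 + k*q1) - q2 - a*q1 - m*q1*q2 = 0 := by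
      rcases mul_eq_zero.1 he2 with h | h
      · exact absurd h (ne_of_gt hq2)
      · exact h
    have hH : Hfun a c k m q1 = 0 := by
      have h3 : Hfun a c k m q1 = 1/(1 + k*q1) - q2 - a*q1 - m*q1*q2 := by
        unfold Hfun
        rw [hq2eq, one_div]
        field_simp
        ring
      rw [h3, hfac2]
    have hq1xs : q1 = xs := hxsuniq q1 ⟨hq1, hq1lt⟩ hH
    have : q2 = (1 - xs)/c := by rw [hq2eq, hq1xs]
    rw [Prod.mk.injEq]
    exact ⟨hq1xs, this⟩
  · -- convergence
    intro x y hdx hdy hx' hy' hx0 hy0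
    apply converges a b c k m ha hb hc hc1 hk hk1 hm _ x y hdx hdy hx' hy' hx0 hy0
    rintro ⟨q1, q2⟩ ⟨hq1, hq2, he1, he2⟩
    simp only at hq1 hq2 he1 he2
    have hfac1 : 1 - q1 - c * q2 = 0 := by
      rcases mul_eq_zero.1 he1 with h | h
      · exact absurd h (ne_of_gt (mul_pos hb hq1))
      · exact h
    have hq2eq : q2 = (1 - q1)/c := by
      field_simp
      linarith
    have hq1lt : q1 < 1 := by nlinarith [mul_pos hc hq2]
    have hfac2 : 1/(1 + k*q1) - q2 - a*q1 - m*q1*q2 = 0 := by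
      rcases mul_eq_zero.1 he2 with h | h
      · exact absurd h (ne_of_gt hq2)
      · exact h
    have hH : Hfun a c k m q1 = 0 := by
      have h3 : Hfun a c k m q1 = 1/(1 + k*q1) - q2 - a*q1 - m*q1*q2 := by
        unfold Hfun
        rw [hq2eq, one_div]
        field_simp
        ring
      rw [h3, hfac2]
    have hq1xs : q1 = xs := hxsuniq q1 ⟨hq1, hq1lt⟩ hH
    have : q2 = (1 - xs)/c := by rw [hq2eq, hq1xs]
    rw [Prod.mk.injEq]
    exact ⟨hq1xs, this⟩
end

section
/- Let a,b,k,m > 0 and set c = 1 (the transcritical bifurcation threshold c_{TR} = 1 for system (2) at E₂ = (0,1)). Regard F(x,y,c) = b·x·(1 − x − c·y) as a function of (x,y,c). Then at the point (x,y,c) = (0,1,1): (i) ∂F/∂c = 0; (ii) the Sotomayor transversality quantity (−1/(a+k+m))·∂²F/∂c∂x + ∂²F/∂c∂y equals b/(a+k+m), which is nonzero; and (iii) the quantity (1/(a+k+m)²)·∂²F/∂x² − (2/(a+k+m))·∂²F/∂x∂y + ∂²F/∂y² equals 2b(a+k+m−1)/(a+k+m)², which is nonzero whenever m ≠ 1 −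 a − k. -/
lemma deriv_quad (p q r x : ℝ) :
    deriv (fun t : ℝ => p * t ^ 2 + q * t + r) x = 2 * p * x + q := by
  have h := ((hasDerivAt_pow 2 x).const_mul p).add
      (((hasDerivAt_id x).const_mul q).add (hasDerivAt_const x r))
  have h' : HasDerivAt (fun t : ℝ => p * t ^ 2 + q * t + r)
      (p * ((2:ℕ) * x ^ (2 - 1)) + (q * 1 + 0)) x := by
    simpa [id, add_assoc, Pi.add_def] using h
  rw [h'.deriv]; push_cast; ring

/-- The first component F(x,y,c) = b·x·(1 − x − c·y) of the vector field of
system (2), with the interspecific competition rate c as an explicit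
variable. -/
noncomputable def Ffun (b : ℝ) (x y γ : ℝ) : ℝ :=
  b * x * (1 - x - γ * y)

/-- **Sotomayor transversality computations at E₂ = (0,1), c = c_{TR} = 1.**
(i) ∂F/∂c = 0;
(ii) (−1/(a+k+m))·∂²F/∂c∂x + ∂²F/∂c∂y = b/(a+k+m) ≠ 0;
(iii) (1/(a+k+m)²)·∂²F/∂x² − (2/(a+k+m))·∂²F/∂x∂y + ∂²F/∂y²
      = 2b(a+k+m−1)/(a+k+m)², which is nonzero whenever m ≠ 1 − a − k;
all evaluated at (x,y,c) = (0,1,1). -/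
theorem transcritical_transversality_E2
    (a b k m : ℝ) (ha : 0 < a) (hb : 0 < b) (hk : 0 < k) (hm : 0 < m) :
    deriv (fun γ : ℝ => Ffun b 0 1 γ) 1 = 0 ∧
    (-(1 / (a + k + m)) *
          deriv (fun γ : ℝ => deriv (fun x : ℝ => Ffun b x 1 γ) 0) 1 +
        deriv (fun γ : ℝ => deriv (fun y : ℝ => Ffun b 0 y γ) 1) 1 =
      b / (a + k + m) ∧ b / (a + k + m) ≠ 0) ∧
    ((1 / (a + k + m) ^ 2) * deriv (deriv (fun x : ℝ => Ffun b x 1 1)) 0 -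
        (2 / (a + k + m)) *
          deriv (fun y : ℝ => deriv (fun x : ℝ => Ffun b x y 1) 0) 1 +
        deriv (deriv (fun y : ℝ => Ffun b 0 y 1)) 1 =
      2 * b * (a + k + m - 1) / (a + k + m) ^ 2 ∧
      (m ≠ 1 - a - k → 2 * b * (a + k + m - 1) / (a + k + m) ^ 2 ≠ 0)) := by
  have hs : a + k + m ≠ 0 := by positivity
  -- generic: deriv in x of F at 0 is b*(1-γ*y)
  have hx : ∀ y γ : ℝ, deriv (fun x : ℝ => Ffun b x y γ) 0 = b * (1 - γ * y) := by
    intro y γ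
    have he : (fun x : ℝ => Ffun b x y γ)
        = fun x : ℝ => (-b) * x ^ 2 + (b * (1 - γ * y)) * x + 0 := by
      funext x; simp only [Ffun]; ring
    rw [he, deriv_quad]; ring
  -- deriv in y of F(0,y,γ) : function is constantly 0
  have hy0 : ∀ γ : ℝ, (fun y : ℝ => Ffun b 0 y γ) = fun _ => (0:ℝ) := by
    intro γ; funext y; simp [Ffun]
  refine ⟨?_, ⟨?_, ?_⟩, ?_, ?_⟩
  · have : (fun γ : ℝ => Ffun b 0 1 γ) = fun _ => (0:ℝ) := by
      funext γ; simp [Ffun]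
    rw [this, deriv_const]
  · have h1 : (fun γ : ℝ => deriv (fun x : ℝ => Ffun b x 1 γ) 0)
        = fun γ : ℝ => (0:ℝ) * γ ^ 2 + (-b) * γ + b := by
      funext γ; rw [hx]; ring
    have h2 : (fun γ : ℝ => deriv (fun y : ℝ => Ffun b 0 y γ) 1)
        = fun _ => (0:ℝ) := by
      funext γ; rw [hy0, deriv_const]
    rw [h1, h2, deriv_quad, deriv_const]
    field_simp
    ring
  · exact div_ne_zero hb.ne' hs
  · have hxx : (fun x : ℝ => Ffun b x 1 1)
        = fun x : ℝ => (-b) * x ^ 2 + 0 * x + 0 := by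
      funext x; simp only [Ffun]; ring
    have hdxx : deriv (deriv (fun x : ℝ => Ffun b x 1 1)) 0 = -2 * b := by
      rw [hxx]
      have : deriv (fun x : ℝ => (-b) * x ^ 2 + 0 * x + 0)
          = fun x : ℝ => 0 * x ^ 2 + (2 * (-b)) * x + 0 := by
        funext x; rw [deriv_quad]; ring
      rw [this, deriv_quad]; ring
    have hxy : (fun y : ℝ => deriv (fun x : ℝ => Ffun b x y 1) 0)
        = fun y : ℝ => 0 * y ^ 2 + (-b) * y + b := by
      funext y; rw [hx]; ring
    have hyy : deriv (deriv (fun y : ℝ => Ffun b 0 y 1)) 1 = 0 := by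
      rw [hy0]
      have : deriv (fun _ : ℝ => (0:ℝ)) = fun _ => (0:ℝ) := by
        funext y; rw [deriv_const]
      rw [this, deriv_const]
    rw [hdxx, hxy, hyy, deriv_quad]
    field_simp; ring
  · intro hne
    have : a + k + m - 1 ≠ 0 := by
      intro h; apply hne; linarith
    positivity
end
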